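/- arXiv:2305.01304 — 5 statements merged into one kernel-verified Lean document; each statement's English description precedes it below -/
import Mathlib

section
/- Let N ≥ 1. A function g : ℚ^N → ℚ has finite functional degree if and only if there exists a polynomial P ∈ ℚ[t_1, …, t_N] with g(x) = P(x_1, …, x_N) for all x ∈ ℚ^N. Moreover, if fdeg(g) ≤ d for d ∈ ℕ, then P can be chosen of total degree at most d. -/
/-- The difference operator `Δ_a` sending `f` to `x ↦ f (x + a) - f x`. -/
def disc {A B : Type*} [AddCommGroup A] [AddCommGroup B] (a : A) (f : A → B) : A → B :=
  fun x => f (x + a) - f x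

/-- Iterated difference operator `Δ_{a_1} ⋯ Δ_{a_k} f` along a list `[a_1, …, a_k]`. -/
def multiDisc {A B : Type*} [AddCommGroup A] [AddCommGroup B] : List A → (A → B) → (A → B)
  | [], f => f
  | a :: l, f => disc a (multiDisc l f)

/-- `FdegLE f d` says that the functional degree of `f` is at most `d`, i.e. all
`(d+1)`-fold iterated differences of `f` vanish. -/
def FdegLE {A B : Type*} [AddCommGroup A] [AddCommGroup B] (f : A → B) (d : ℕ) : Prop :=
  ∀ l : List A, l.length = d + 1 → multiDisc l f = 0

open Finset

namespace FdegAux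

variable {A B : Type*} [AddCommGroup A] [AddCommGroup B]

lemma disc_eq_fwdDiff (a : A) (f : A → B) : disc a f = fwdDiff a f := rfl

lemma multiDisc_append (l₁ l₂ : List A) (f : A → B) :
    multiDisc (l₁ ++ l₂) f = multiDisc l₁ (multiDisc l₂ f) := by
  induction l₁ with
  | nil => rfl
  | cons a l ih => simp only [List.cons_append, multiDisc, ih]

lemma disc_zero_fun (a : A) : disc a (0 : A → B) = 0 := by
  funext x; simp [disc]

lemma multiDisc_zero (l : List A) : multiDisc l (0 : A → B) = 0 := by
  induction l with
  | nil => rfl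
  | cons a l ih => simp only [multiDisc, ih, disc_zero_fun]

lemma disc_add (a : A) (f g : A → B) : disc a (f + g) = disc a f + disc a g := by
  funext x; simp only [disc, Pi.add_apply]; abel

lemma multiDisc_add (l : List A) (f g : A → B) :
    multiDisc l (f + g) = multiDisc l f + multiDisc l g := by
  induction l with
  | nil => rfl
  | cons a l ih => simp only [multiDisc, ih, disc_add]

lemma disc_neg (a : A) (f : A → B) : disc a (-f) = -(disc a f) := by
  funext x; simp only [disc, Pi.neg_apply]; abel

lemma multiDisc_neg (l : List A) (f : A → B) : multiDisc l (-f) = -(multiDisc l f) := by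
  induction l with
  | nil => rfl
  | cons a l ih => simp only [multiDisc, ih, disc_neg]

lemma fdegLE_zero_fun (d : ℕ) : FdegLE (0 : A → B) d := fun l _ => multiDisc_zero l

lemma fdegLE_mono {f : A → B} {d d' : ℕ} (h : FdegLE f d) (hdd : d ≤ d') : FdegLE f d' := by
  intro l hl
  have hsplit : l = l.take (d' - d) ++ l.drop (d' - d) := (List.take_append_drop _ _).symm
  rw [hsplit, multiDisc_append, h (l.drop (d' - d)) (by simp [hl]; omega), multiDisc_zero]

lemma fdegLE_add {f g : A → B} {d : ℕ} (hf : FdegLE f d) (hg : FdegLE g d) :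
    FdegLE (f + g) d := by
  intro l hl
  rw [multiDisc_add, hf l hl, hg l hl, add_zero]

lemma fdegLE_neg {f : A → B} {d : ℕ} (hf : FdegLE f d) : FdegLE (-f) d := by
  intro l hl
  rw [multiDisc_neg, hf l hl, neg_zero]

lemma fdegLE_sub {f g : A → B} {d : ℕ} (hf : FdegLE f d) (hg : FdegLE g d) :
    FdegLE (f - g) d := by
  rw [sub_eq_add_neg]; exact fdegLE_add hf (fdegLE_neg hg)

lemma fdegLE_sum {ι : Type*} (s : Finset ι) (f : ι → A → B) {d : ℕ}
    (h : ∀ i ∈ s, FdegLE (f i) d) : FdegLE (∑ i ∈ s, f i) d := by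
  classical
  induction s using Finset.induction_on with
  | empty => simpa using fdegLE_zero_fun d
  | insert _ _ hni ih =>
    rw [Finset.sum_insert hni]
    exact fdegLE_add (h _ (Finset.mem_insert_self _ _))
      (ih fun i hi => h i (Finset.mem_insert_of_mem hi))

lemma fdegLE_zero_iff {f : A → B} : FdegLE f 0 ↔ ∀ a, disc a f = 0 := by
  constructor
  · intro h a
    exact h [a] rfl
  · intro h l hl
    match l, hl with
    | [a], _ => exact h a

lemma fdegLE_const (b : B) : FdegLE (fun _ : A => b) 0 := by
  rw [fdegLE_zero_iff]
  intro a; funext x; simp [disc]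

lemma fdegLE_disc {f : A → B} {d : ℕ} (h : FdegLE f (d + 1)) (a : A) :
    FdegLE (disc a f) d := by
  intro l hl
  have : multiDisc l (disc a f) = multiDisc (l ++ [a]) f := by
    rw [multiDisc_append]; rfl
  rw [this, h (l ++ [a]) (by simp [hl])]

lemma fdegLE_of_forall_disc {f : A → B} {d : ℕ} (h : ∀ a, FdegLE (disc a f) d) :
    FdegLE f (d + 1) := by
  intro l hl
  rcases List.eq_nil_or_concat l with rfl | ⟨l', a, rfl⟩
  all_goals try rw [List.concat_eq_append] at *
  · simp at hl
  · rw [multiDisc_append]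
    have hlen : l'.length = d + 1 := by simpa using hl
    have : multiDisc [a] f = disc a f := rfl
    rw [this, h a l' hlen]

lemma disc_shift (a b : A) (f : A → B) :
    disc b (fun x => f (x + a)) = fun x => disc b f (x + a) := by
  funext x; simp only [disc]; rw [add_right_comm]

lemma multiDisc_shift (l : List A) (a : A) (f : A → B) :
    multiDisc l (fun x => f (x + a)) = fun x => multiDisc l f (x + a) := by
  induction l with
  | nil => rfl
  | cons b l ih => simp only [multiDisc, ih, disc_shift]

lemma fdegLE_shift {f : A → B} {d : ℕ} (h : FdegLE f d) (a : A) :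
    FdegLE (fun x => f (x + a)) d := by
  intro l hl
  rw [multiDisc_shift, h l hl]
  funext x; rfl

section Ring
variable {R : Type*} [CommRing R]

lemma disc_mul (a : A) (f g : A → R) :
    disc a (f * g) = disc a f * (fun x => g (x + a)) + f * disc a g := by
  funext x; simp only [disc, Pi.add_apply, Pi.mul_apply]; ring

lemma fdegLE_mul_aux (k : ℕ) : ∀ m n : ℕ, m + n ≤ k → ∀ f g : A → R,
    FdegLE f m → FdegLE g n → FdegLE (f * g) (m + n) := by
  induction k with
  | zero =>
    intro m n hk f g hf hg
    have hm : m = 0 := by omega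
    have hn : n = 0 := by omega
    subst hm; subst hn
    rw [fdegLE_zero_iff]
    intro a
    rw [disc_mul, fdegLE_zero_iff.mp hf a, fdegLE_zero_iff.mp hg a]
    funext x; simp
  | succ k ih =>
    intro m n hk f g hf hg
    rcases le_or_gt (m + n) k with h | h
    · exact ih m n h f g hf hg
    have hs : m + n = k + 1 := by omega
    rw [hs]
    apply fdegLE_of_forall_disc
    intro a
    rw [disc_mul]
    apply fdegLE_add
    · match m, hf with
      | 0, hf =>
        rw [fdegLE_zero_iff.mp hf a]
        have : (0 : A → R) * (fun x => g (x + a)) = 0 := by funext x; simp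
        rw [this]
        exact fdegLE_zero_fun k
      | m' + 1, hf =>
        have h1 : FdegLE (disc a f) m' := fdegLE_disc hf a
        have h2 : FdegLE (fun x => g (x + a)) n := fdegLE_shift hg a
        have h3 := ih m' n (by omega) _ _ h1 h2
        exact fdegLE_mono h3 (by omega)
    · match n, hg with
      | 0, hg =>
        rw [fdegLE_zero_iff.mp hg a]
        have : f * (0 : A → R) = 0 := by funext x; simp
        rw [this]
        exact fdegLE_zero_fun k
      | n' + 1, hg =>
        have h1 : FdegLE (disc a g) n' := fdegLE_disc hg a
        have h3 := ih m n' (by omega) _ _ hf h1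
        exact fdegLE_mono h3 (by omega)

lemma fdegLE_mul {m n : ℕ} {f g : A → R} (hf : FdegLE f m) (hg : FdegLE g n) :
    FdegLE (f * g) (m + n) :=
  fdegLE_mul_aux (m + n) m n le_rfl f g hf hg

end Ring

end FdegAux

namespace FdegAux

open MvPolynomial

lemma fdegLE_coord {N : ℕ} (i : Fin N) : FdegLE (fun x : Fin N → ℚ => x i) 1 := by
  apply fdegLE_of_forall_disc
  intro a
  have : disc a (fun x : Fin N → ℚ => x i) = fun _ => a i := by
    funext x; simp [disc]
  rw [this]
  exact fdegLE_const (a i)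

lemma fdegLE_coord_pow {N : ℕ} (i : Fin N) (k : ℕ) :
    FdegLE (fun x : Fin N → ℚ => x i ^ k) k := by
  induction k with
  | zero => simpa using fdegLE_const (A := Fin N → ℚ) (1 : ℚ)
  | succ k ih =>
    have : (fun x : Fin N → ℚ => x i ^ (k + 1)) =
        (fun x : Fin N → ℚ => x i ^ k) * (fun x : Fin N → ℚ => x i) := by
      funext x; simp [pow_succ]
    rw [this]
    exact fdegLE_mul ih (fdegLE_coord i)

lemma fdegLE_monomial_fun {N : ℕ} (β : Fin N → ℕ) (s : Finset (Fin N)) :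
    FdegLE (fun x : Fin N → ℚ => ∏ i ∈ s, x i ^ β i) (∑ i ∈ s, β i) := by
  classical
  induction s using Finset.induction_on with
  | empty => simpa using fdegLE_const (A := Fin N → ℚ) (1 : ℚ)
  | @insert j s hj ih =>
    have : (fun x : Fin N → ℚ => ∏ i ∈ insert j s, x i ^ β i) =
        (fun x : Fin N → ℚ => x j ^ β j) * (fun x : Fin N → ℚ => ∏ i ∈ s, x i ^ β i) := by
      funext x; simp [Finset.prod_insert hj]
    rw [this, Finset.sum_insert hj]
    exact fdegLE_mul (fdegLE_coord_pow j (β j)) ih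

lemma fdegLE_eval {N : ℕ} (P : MvPolynomial (Fin N) ℚ) {d : ℕ} (hd : P.totalDegree ≤ d) :
    FdegLE (fun x : Fin N → ℚ => eval x P) d := by
  classical
  have hrw : (fun x : Fin N → ℚ => eval x P) =
      ∑ β ∈ P.support, fun x : Fin N → ℚ => P.coeff β * ∏ i, x i ^ β i := by
    funext x
    rw [eval_eq']
    simp [Finset.sum_apply]
  rw [hrw]
  apply fdegLE_sum
  intro β hβ
  have h1 : (fun x : Fin N → ℚ => P.coeff β * ∏ i, x i ^ β i) =
      (fun _ : Fin N → ℚ => P.coeff β) * (fun x : Fin N → ℚ => ∏ i, x i ^ β i) := rfl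
  rw [h1]
  have h2 := fdegLE_mul (fdegLE_const (A := Fin N → ℚ) (P.coeff β))
    (fdegLE_monomial_fun (fun i => β i) Finset.univ)
  apply fdegLE_mono h2
  rw [zero_add]
  have h3 : ∑ i, β i ≤ P.totalDegree := by
    have := le_totalDegree hβ
    rwa [Finsupp.sum_fintype _ _ (fun _ => rfl)] at this
  omega

end FdegAux

namespace FdegAux

open Polynomial in
lemma seq_eq_zero (d q : ℕ) (hq : 1 ≤ q) (s : ℕ → ℚ)
    (hs : (fwdDiff 1)^[d + 1] s = 0)
    (h0 : ∀ j : ℕ, s (j * q) = 0) : ∀ n, s n = 0 := by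
  -- all higher differences vanish
  have hvan : ∀ k, d + 1 ≤ k → (fwdDiff 1)^[k] s = 0 := by
    intro k hk
    obtain ⟨m, rfl⟩ := Nat.exists_eq_add_of_le hk
    rw [Nat.add_comm, Function.iterate_add_apply, hs]
    induction m with
    | zero => rfl
    | succ m ih => rw [Function.iterate_succ_apply', ih (by omega)]; funext x; simp [fwdDiff]
  set c : ℕ → ℚ := fun k => (fwdDiff 1)^[k] s 0 with hc
  -- Newton formula
  have key : ∀ n : ℕ, s n = ∑ k ∈ Finset.range (d + 1), (n.choose k : ℚ) * c k := by
    intro n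
    have h1 := shift_eq_sum_fwdDiff_iter 1 s n 0
    have h2 : (0 : ℕ) + n • 1 = n := by simp
    rw [h2] at h1
    have h3 : ∀ k ∈ Finset.range (n + 1 + (d + 1)) \ Finset.range (n + 1),
        n.choose k • (fwdDiff 1)^[k] s 0 = 0 := by
      intro k hk
      simp only [Finset.mem_sdiff, Finset.mem_range] at hk
      rw [Nat.choose_eq_zero_of_lt (by omega)]
      simp
    have h4 : ∀ k ∈ Finset.range (n + 1 + (d + 1)) \ Finset.range (d + 1),
        (n.choose k : ℚ) * c k = 0 := by
      intro k hk
      simp only [Finset.mem_sdiff, Finset.mem_range] at hk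
      have : c k = 0 := by rw [hc]; simp only; rw [hvan k (by omega)]; rfl
      rw [this, mul_zero]
    calc s n = ∑ k ∈ Finset.range (n + 1), n.choose k • (fwdDiff 1)^[k] s 0 := h1
    _ = ∑ k ∈ Finset.range (n + 1 + (d + 1)), n.choose k • (fwdDiff 1)^[k] s 0 :=
        Finset.sum_subset (Finset.range_subset_range.mpr (by omega)) (fun k hk hnk =>
          h3 k (Finset.mem_sdiff.mpr ⟨hk, hnk⟩))
    _ = ∑ k ∈ Finset.range (n + 1 + (d + 1)), (n.choose k : ℚ) * c k := by
        apply Finset.sum_congr rfl; intro k _; rw [nsmul_eq_mul]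
    _ = ∑ k ∈ Finset.range (d + 1), (n.choose k : ℚ) * c k :=
        (Finset.sum_subset (Finset.range_subset_range.mpr (by omega)) (fun k hk hnk =>
          h4 k (Finset.mem_sdiff.mpr ⟨hk, hnk⟩))).symm
  -- interpolating polynomial
  set Q : ℚ[X] := ∑ k ∈ Finset.range (d + 1), C (c k * ((k.factorial : ℚ))⁻¹) * descPochhammer ℚ k
    with hQ
  have hQeval : ∀ n : ℕ, Q.eval (n : ℚ) = s n := by
    intro n
    rw [hQ, key n]
    rw [Polynomial.eval_finset_sum]
    apply Finset.sum_congr rfl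
    intro k _
    rw [eval_mul, eval_C, descPochhammer_eval_eq_descFactorial ℚ n k]
    rw [Nat.descFactorial_eq_factorial_mul_choose]
    push_cast
    field_simp
  have hQdeg : Q.natDegree ≤ d := by
    rw [hQ]
    apply Polynomial.natDegree_sum_le_of_forall_le
    intro k hk
    apply le_trans (Polynomial.natDegree_C_mul_le _ _)
    rw [descPochhammer_natDegree]
    exact Nat.lt_succ_iff.mp (Finset.mem_range.mp hk)
  have hQ0 : Q = 0 := by
    apply Polynomial.eq_zero_of_natDegree_lt_card_of_eval_eq_zero' Q
      ((Finset.range (d + 1)).image (fun j => ((j * q : ℕ) : ℚ)))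
    · intro y hy
      obtain ⟨j, _, rfl⟩ := Finset.mem_image.mp hy
      rw [hQeval, h0]
    · have hinj : Set.InjOn (fun j : ℕ => ((j * q : ℕ) : ℚ)) (Finset.range (d + 1)) := by
        intro a _ b _ hab
        simp only at hab
        have : a * q = b * q := by exact_mod_cast hab
        exact Nat.eq_of_mul_eq_mul_right (by omega) this
      rw [Finset.card_image_of_injOn hinj, Finset.card_range]
      omega
  intro n
  rw [← hQeval n, hQ0, Polynomial.eval_zero]

lemma multiDisc_replicate {A B : Type*} [AddCommGroup A] [AddCommGroup B]
    (n : ℕ) (a : A) (f : A → B) :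
    multiDisc (List.replicate n a) f = (fwdDiff a)^[n] f := by
  induction n with
  | zero => rfl
  | succ n ih =>
    rw [List.replicate_succ]
    show disc a (multiDisc (List.replicate n a) f) = _
    rw [ih, Function.iterate_succ_apply', disc_eq_fwdDiff]

end FdegAux

namespace FdegAux

lemma oneDim_int (d : ℕ) (f : ℚ → ℚ) (hf : FdegLE f d) (h0 : ∀ m : ℕ, f m = 0) :
    ∀ z : ℤ, f z = 0 := by
  have hD : (fwdDiff (1 : ℚ))^[d + 1] f = 0 := by
    rw [← multiDisc_replicate]
    exact hf _ List.length_replicate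
  have hneg : ∀ n : ℕ, f (-(n : ℚ)) = 0 := by
    intro n
    induction n using Nat.strong_induction_on with
    | _ n ih =>
      have h1 := fwdDiff_iter_eq_sum_shift (1 : ℚ) f (d + 1) (-(n : ℚ))
      rw [hD] at h1
      have h2 : ∀ k ∈ Finset.range (d + 1),
          ((-1 : ℤ) ^ (d + 1 - (k + 1)) * ((d + 1).choose (k + 1) : ℤ)) •
            f (-(n : ℚ) + (k + 1) • (1 : ℚ)) = 0 := by
        intro k _
        have hv : f (-(n : ℚ) + (k + 1) • (1 : ℚ)) = 0 := by
          have hsm : -(n : ℚ) + (k + 1) • (1 : ℚ) = -(n : ℚ) + ((k + 1 : ℕ) : ℚ) := by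
            push_cast; ring
          rw [hsm]
          rcases le_or_gt (k + 1) n with h | h
          · have heq : -(n : ℚ) + ((k + 1 : ℕ) : ℚ) = -((n - (k + 1) : ℕ) : ℚ) := by
              rw [Nat.cast_sub h]; push_cast; ring
            rw [heq]
            exact ih _ (by omega)
          · have heq : -(n : ℚ) + ((k + 1 : ℕ) : ℚ) = ((k + 1 - n : ℕ) : ℚ) := by
              rw [Nat.cast_sub (by omega : n ≤ k + 1)]; push_cast; ring
            rw [heq]
            exact h0 _
        rw [hv, smul_zero]
      rw [Finset.sum_range_succ', Finset.sum_eq_zero h2, zero_add] at h1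
      simp only [Nat.sub_zero, Nat.choose_zero_right, Nat.cast_one, mul_one, zero_smul,
        add_zero, zsmul_eq_mul] at h1
      rw [Pi.zero_apply] at h1
      rcases mul_eq_zero.mp h1.symm with h | h
      · exact absurd h (Int.cast_ne_zero.mpr (pow_ne_zero _ (by norm_num)))
      · exact h
  intro z
  obtain ⟨n, rfl | rfl⟩ := Int.eq_nat_or_neg z
  · push_cast
    exact h0 n
  · push_cast
    exact hneg n

lemma oneDim (d : ℕ) (f : ℚ → ℚ) (hf : FdegLE f d) (h0 : ∀ m : ℕ, f m = 0) :
    ∀ x : ℚ, f x = 0 := by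
  intro x
  set s : ℕ → ℚ := fun k => f (k * x) with hsdef
  have hcomp : ∀ n : ℕ, (fwdDiff 1)^[n] s = fun k : ℕ => ((fwdDiff x)^[n] f) (k * x) := by
    intro n
    induction n with
    | zero => rfl
    | succ n ih =>
      rw [Function.iterate_succ_apply', Function.iterate_succ_apply', ih]
      funext k
      show ((fwdDiff x)^[n] f) ((k + 1 : ℕ) * x) - ((fwdDiff x)^[n] f) (k * x) = _
      rw [show ((k + 1 : ℕ) : ℚ) * x = (k : ℚ) * x + x by push_cast; ring]
      rfl
  have hs : (fwdDiff 1)^[d + 1] s = 0 := by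
    rw [hcomp]
    have : (fwdDiff x)^[d + 1] f = 0 := by
      rw [← multiDisc_replicate]
      exact hf _ List.length_replicate
    rw [this]
    rfl
  have hden : ((x.den : ℚ)) * x = (x.num : ℚ) := by
    have hdne : ((x.den : ℚ)) ≠ 0 := by
      exact_mod_cast x.den_nz
    have h := Rat.num_div_den x
    have : ((x.den : ℚ)) * ((x.num : ℚ) / (x.den : ℚ)) = (x.num : ℚ) := by
      field_simp
    rw [h] at this
    exact this
  have hzero : ∀ j : ℕ, s (j * x.den) = 0 := by
    intro j
    rw [hsdef]
    simp only
    rw [show (((j * x.den : ℕ)) : ℚ) * x = ((j * x.num : ℤ) : ℚ) by push_cast; rw [mul_assoc, hden]]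
    exact oneDim_int d f hf h0 _
  have := seq_eq_zero d x.den x.pos s hs hzero 1
  rw [hsdef] at this
  simpa using this

end FdegAux

namespace FdegAux

variable {N : ℕ}

lemma update_add_single (x : Fin N → ℚ) (k : Fin N) (s b : ℚ) :
    Function.update x k s + Pi.single k b = Function.update x k (s + b) := by
  funext i
  by_cases h : i = k
  · subst h; simp
  · simp [Function.update_of_ne h, Pi.single_eq_of_ne h]

lemma multiDisc_slice (f : (Fin N → ℚ) → ℚ) (x : Fin N → ℚ) (k : Fin N) (l : List ℚ) :
    multiDisc l (fun t => f (Function.update x k t)) =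
      fun t => multiDisc (l.map (fun b => Pi.single k b)) f (Function.update x k t) := by
  induction l with
  | nil => rfl
  | cons a l ih =>
    show disc a (multiDisc l fun t => f (Function.update x k t)) = _
    rw [ih]
    funext t
    show multiDisc (l.map _) f (Function.update x k (t + a)) -
        multiDisc (l.map _) f (Function.update x k t) = _
    rw [← update_add_single x k t a]
    rfl

lemma fdegLE_slice {f : (Fin N → ℚ) → ℚ} {d : ℕ} (hf : FdegLE f d) (x : Fin N → ℚ) (k : Fin N) :
    FdegLE (fun t => f (Function.update x k t)) d := by
  intro l hl
  rw [multiDisc_slice]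
  rw [hf (l.map (fun b => Pi.single k b)) (by simp [hl])]
  rfl

lemma ext_from_natGrid (d : ℕ) (f : (Fin N → ℚ) → ℚ) (hf : FdegLE f d)
    (h0 : ∀ m : Fin N → ℕ, f (fun i => (m i : ℚ)) = 0) : ∀ x, f x = 0 := by
  suffices H : ∀ k : ℕ, ∀ x : Fin N → ℚ,
      (∀ i : Fin N, k ≤ i.val → ∃ m : ℕ, x i = (m : ℚ)) → f x = 0 by
    intro x
    exact H N x (fun i hi => absurd i.isLt (by omega))
  intro k
  induction k with
  | zero =>
    intro x hx
    choose m hm using fun i => hx i (Nat.zero_le _)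
    have : x = fun i => (m i : ℚ) := funext hm
    rw [this]
    exact h0 m
  | succ k ih =>
    intro x hx
    by_cases hkN : k < N
    · set κ : Fin N := ⟨k, hkN⟩
      have hφ : ∀ t : ℚ, ∀ m : ℕ, (t = (m : ℚ)) → f (Function.update x κ t) = 0 := by
        intro t m hm
        apply ih
        intro i hi
        by_cases h : i = κ
        · subst h; exact ⟨m, by simpa using hm⟩
        · have : k + 1 ≤ i.val := by
            rcases Nat.lt_or_ge i.val (k + 1) with hlt | hge
            · exfalso
              apply h
              have : i.val = k := by omega
              exact Fin.ext this
            · exact hge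
          rw [Function.update_of_ne h]
          exact hx i this
      have hzero : ∀ m : ℕ, (fun t => f (Function.update x κ t)) (m : ℚ) = 0 :=
        fun m => hφ (m : ℚ) m rfl
      have := oneDim d _ (fdegLE_slice hf x κ) hzero (x κ)
      rwa [Function.update_eq_self] at this
    · apply ih
      intro i hi
      exact hx i (by omega)

lemma natGrid_zero (d : ℕ) : ∀ f : (Fin N → ℚ) → ℚ, FdegLE f d →
    (∀ m : Fin N → ℕ, (∑ i, m i) ≤ d → f (fun i => (m i : ℚ)) = 0) →
    ∀ m : Fin N → ℕ, f (fun i => (m i : ℚ)) = 0 := by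
  induction d with
  | zero =>
    intro f hf h0 m
    have h1 : ∀ x : Fin N → ℚ, f x = f 0 := by
      intro x
      have := congrFun (fdegLE_zero_iff.mp hf x) 0
      simp only [disc, Pi.zero_apply, zero_add] at this
      linarith [this]
    rw [h1]
    have := h0 (fun _ => 0) (by simp)
    rw [show (fun i : Fin N => ((0 : ℕ) : ℚ)) = (0 : Fin N → ℚ) by funext i; simp] at this
    exact this
  | succ d ih =>
    intro f hf h0
    -- step relations
    have hstep : ∀ (i : Fin N) (m : Fin N → ℕ),
        f (fun j => ((Function.update m i (m i + 1)) j : ℚ)) = f (fun j => (m j : ℚ)) := by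
      intro i
      have hfi : FdegLE (disc (Pi.single i 1) f) d := fdegLE_disc hf (Pi.single i 1)
      have h0i : ∀ m : Fin N → ℕ, (∑ j, m j) ≤ d →
          disc (Pi.single i 1) f (fun j => (m j : ℚ)) = 0 := by
        intro m hm
        have hcoe : (fun j => (m j : ℚ)) + Pi.single i 1 =
            fun j => ((Function.update m i (m i + 1)) j : ℚ) := by
          funext j
          by_cases h : j = i
          · subst h; simp
          · simp [Function.update_of_ne h, Pi.single_eq_of_ne h]
        show f ((fun j => (m j : ℚ)) + Pi.single i 1) - f (fun j => (m j : ℚ)) = 0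
        rw [hcoe, h0 _ (hm.trans (by omega)), h0 _ (by
          rw [Finset.sum_update_of_mem (Finset.mem_univ i), ← Finset.erase_eq]
          have h5 := Finset.add_sum_erase Finset.univ m (Finset.mem_univ i)
          omega), sub_zero]
      have := ih (disc (Pi.single i 1) f) hfi h0i
      intro m
      have h2 := this m
      show _ = _
      have h3 : disc (Pi.single i 1) f (fun j => (m j : ℚ)) = 0 := h2
      have hcoe : (fun j => (m j : ℚ)) + Pi.single i 1 =
          fun j => ((Function.update m i (m i + 1)) j : ℚ) := by
        funext j
        by_cases h : j = i
        · subst h; simp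
        · simp [Function.update_of_ne h, Pi.single_eq_of_ne h]
      have h4 : f ((fun j => (m j : ℚ)) + Pi.single i 1) - f (fun j => (m j : ℚ)) = 0 := h3
      rw [hcoe] at h4
      linarith [h4]
    -- induction on total sum
    suffices H : ∀ n : ℕ, ∀ m : Fin N → ℕ, (∑ i, m i) = n → f (fun i => (m i : ℚ)) = 0 by
      intro m; exact H (∑ i, m i) m rfl
    intro n
    induction n using Nat.strong_induction_on with
    | _ n ihn =>
      intro m hm
      rcases Nat.eq_zero_or_pos n with rfl | hn
      · exact h0 m (by omega)
      · have : ∃ i, 0 < m i := by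
          by_contra h
          push_neg at h
          have : ∑ i, m i = 0 := Finset.sum_eq_zero (fun i _ => by have := h i; omega)
          omega
        obtain ⟨i, hi⟩ := this
        set m' : Fin N → ℕ := Function.update m i (m i - 1) with hm'
        have hup : Function.update m' i (m' i + 1) = m := by
          funext j
          by_cases h : j = i
          · subst h
            simp only [hm', Function.update_self]
            omega
          · simp [hm', Function.update_of_ne h]
        have hsum' : ∑ j, m' j < n := by
          rw [hm', Finset.sum_update_of_mem (Finset.mem_univ i), ← Finset.erase_eq]
          have h5 := Finset.add_sum_erase Finset.univ m (Finset.mem_univ i)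
          omega
        have := hstep i m'
        rw [hup] at this
        rw [this]
        exact ihn _ hsum' m' rfl

end FdegAux

namespace FdegAux

open MvPolynomial

variable (N : ℕ)

/-- basis polynomial `∏ i, binom(X i, m i)` (up to normalization). -/
noncomputable def interpB (m : Fin N → ℕ) : MvPolynomial (Fin N) ℚ :=
  MvPolynomial.C (((∏ i, (m i).factorial : ℕ) : ℚ))⁻¹ *
    ∏ i, ∏ j ∈ Finset.range (m i), (MvPolynomial.X i - MvPolynomial.C (j : ℚ))

noncomputable def evalB (m m' : Fin N → ℕ) : ℚ :=
  MvPolynomial.eval (fun i => (m' i : ℚ)) (interpB N m)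

lemma prod_range_cast_sub (k : ℕ) : ∏ j ∈ Finset.range k, ((k : ℚ) - j) = (k.factorial : ℚ) := by
  induction k with
  | zero => simp
  | succ k ih =>
    rw [Finset.prod_range_succ']
    have h1 : ∀ j ∈ Finset.range k, (((k + 1 : ℕ) : ℚ) - ((j + 1 : ℕ) : ℚ)) = ((k : ℚ) - (j : ℚ)) := by
      intro j _
      push_cast; ring
    rw [Finset.prod_congr rfl h1, ih, Nat.factorial_succ]
    push_cast; ring

lemma evalB_self (m : Fin N → ℕ) : evalB N m m = 1 := by
  rw [evalB, interpB, map_mul, eval_C, map_prod]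
  have h1 : ∀ i : Fin N, MvPolynomial.eval (fun i => (m i : ℚ))
      (∏ j ∈ Finset.range (m i), (MvPolynomial.X i - MvPolynomial.C (j : ℚ)))
      = ((m i).factorial : ℚ) := by
    intro i
    rw [map_prod]
    have : ∀ j ∈ Finset.range (m i), MvPolynomial.eval (fun i => (m i : ℚ))
        (MvPolynomial.X i - MvPolynomial.C (j : ℚ)) = ((m i : ℚ) - j) := by
      intro j _
      simp
    rw [Finset.prod_congr rfl this, prod_range_cast_sub]
  rw [Finset.prod_congr rfl (fun i _ => h1 i)]
  rw [← Nat.cast_prod]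
  rw [inv_mul_cancel₀]
  apply Nat.cast_ne_zero.mpr
  exact Finset.prod_ne_zero_iff.mpr (fun i _ => Nat.factorial_ne_zero _)

lemma evalB_eq_zero {m m' : Fin N → ℕ} (h : ¬ ∀ i, m i ≤ m' i) : evalB N m m' = 0 := by
  push_neg at h
  obtain ⟨i, hi⟩ := h
  rw [evalB, interpB, map_mul, eval_C, map_prod]
  have h1 : MvPolynomial.eval (fun i => (m' i : ℚ))
      (∏ j ∈ Finset.range (m i), (MvPolynomial.X i - MvPolynomial.C (j : ℚ))) = 0 := by
    rw [map_prod]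
    apply Finset.prod_eq_zero (Finset.mem_range.mpr hi)
    simp
  rw [Finset.prod_eq_zero (f := fun a : Fin N => MvPolynomial.eval (fun b => (m' b : ℚ))
    (∏ j ∈ Finset.range (m a), (MvPolynomial.X a - MvPolynomial.C (j : ℚ))))
    (Finset.mem_univ i) h1, mul_zero]

lemma interpB_totalDegree (m : Fin N → ℕ) : (interpB N m).totalDegree ≤ ∑ i, m i := by
  rw [interpB]
  apply le_trans (totalDegree_mul _ _)
  rw [totalDegree_C, zero_add]
  apply le_trans (totalDegree_finset_prod _ _)
  apply Finset.sum_le_sum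
  intro i _
  apply le_trans (totalDegree_finset_prod _ _)
  have : ∀ j ∈ Finset.range (m i),
      (MvPolynomial.X i - MvPolynomial.C (j : ℚ)).totalDegree ≤ 1 := by
    intro j _
    exact le_trans (totalDegree_sub_C_le _ _) (le_of_eq (totalDegree_X i))
  refine le_trans (Finset.sum_le_sum this) ?_
  simp

/-- the finset of `m'` strictly below `m` in the componentwise order. -/
noncomputable def below (m : Fin N → ℕ) : Finset (Fin N → ℕ) :=
  (Fintype.piFinset fun i => Finset.range (m i + 1)).erase m

lemma below_lt {m m' : Fin N → ℕ} (h : m' ∈ below N m) : ∑ i, m' i < ∑ i, m i := by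
  obtain ⟨hne, hmem⟩ := Finset.mem_erase.mp h
  have hle : ∀ i, m' i ≤ m i := fun i =>
    Nat.lt_succ_iff.mp (Finset.mem_range.mp (Fintype.mem_piFinset.mp hmem i))
  have hlt : ∃ i, m' i < m i := by
    by_contra hcon
    push_neg at hcon
    exact hne (funext fun i => le_antisymm (hle i) (hcon i))
  obtain ⟨i, hi⟩ := hlt
  exact Finset.sum_lt_sum (fun j _ => hle j) ⟨i, Finset.mem_univ i, hi⟩

noncomputable def interpC (φ : (Fin N → ℕ) → ℚ) (m : Fin N → ℕ) : ℚ :=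
  φ m - ∑ m' ∈ (below N m).attach, interpC φ m'.1 * evalB N m'.1 m
termination_by ∑ i, m i
decreasing_by exact below_lt N m'.2

end FdegAux

namespace FdegAux

open MvPolynomial

noncomputable def simplexF (N d : ℕ) : Finset (Fin N → ℕ) :=
  (Fintype.piFinset fun _ => Finset.range (d + 1)).filter (fun m => ∑ i, m i ≤ d)

lemma mem_simplexF {N d : ℕ} {m : Fin N → ℕ} : m ∈ simplexF N d ↔ ∑ i, m i ≤ d := by
  rw [simplexF, Finset.mem_filter]
  constructor
  · exact fun h => h.2
  · intro h
    refine ⟨Fintype.mem_piFinset.mpr fun i => Finset.mem_range.mpr ?_, h⟩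
    have : m i ≤ ∑ j, m j := Finset.single_le_sum (fun j _ => Nat.zero_le _) (Finset.mem_univ i)
    omega

noncomputable def interpP (N d : ℕ) (φ : (Fin N → ℕ) → ℚ) : MvPolynomial (Fin N) ℚ :=
  ∑ m ∈ simplexF N d, MvPolynomial.C (interpC N φ m) * interpB N m

lemma interpP_totalDegree (N d : ℕ) (φ : (Fin N → ℕ) → ℚ) :
    (interpP N d φ).totalDegree ≤ d := by
  rw [interpP]
  apply totalDegree_finsetSum_le
  intro m hm
  apply le_trans (totalDegree_mul _ _)
  rw [totalDegree_C, zero_add]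
  exact le_trans (interpB_totalDegree N m) (mem_simplexF.mp hm)

lemma interpP_eval (N d : ℕ) (φ : (Fin N → ℕ) → ℚ) (m0 : Fin N → ℕ) (hm0 : ∑ i, m0 i ≤ d) :
    MvPolynomial.eval (fun i => (m0 i : ℚ)) (interpP N d φ) = φ m0 := by
  rw [interpP, map_sum]
  have hterm : ∀ m, MvPolynomial.eval (fun i => (m0 i : ℚ))
      (MvPolynomial.C (interpC N φ m) * interpB N m) = interpC N φ m * evalB N m m0 := by
    intro m
    rw [map_mul, eval_C]; rfl
  rw [Finset.sum_congr rfl (fun m _ => hterm m)]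
  set T : Finset (Fin N → ℕ) := Fintype.piFinset fun i => Finset.range (m0 i + 1) with hT
  have hsub : T ⊆ simplexF N d := by
    intro m hm
    have hle : ∀ i, m i ≤ m0 i := fun i =>
      Nat.lt_succ_iff.mp (Finset.mem_range.mp (Fintype.mem_piFinset.mp hm i))
    exact mem_simplexF.mpr (le_trans (Finset.sum_le_sum fun i _ => hle i) hm0)
  have hzero : ∀ m ∈ simplexF N d, m ∉ T → interpC N φ m * evalB N m m0 = 0 := by
    intro m _ hmT
    have : ¬ ∀ i, m i ≤ m0 i := by
      intro hall
      exact hmT (Fintype.mem_piFinset.mpr fun i => Finset.mem_range.mpr (by have := hall i; omega))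
    rw [evalB_eq_zero N this, mul_zero]
  rw [← Finset.sum_subset hsub hzero]
  have hm0T : m0 ∈ T := Fintype.mem_piFinset.mpr fun i => Finset.mem_range.mpr (by omega)
  rw [← Finset.add_sum_erase T _ hm0T]
  have herase : T.erase m0 = below N m0 := rfl
  rw [herase, evalB_self, mul_one]
  have hsumattach := Finset.sum_attach (below N m0)
    (fun m' => interpC N φ m' * evalB N m' m0)
  rw [interpC, ← hsumattach]
  ring

theorem main_part2 (N : ℕ) (g : (Fin N → ℚ) → ℚ) (d : ℕ) (hg : FdegLE g d) :
    ∃ P : MvPolynomial (Fin N) ℚ, P.totalDegree ≤ d ∧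
      ∀ x, g x = MvPolynomial.eval x P := by
  set φ : (Fin N → ℕ) → ℚ := fun m => g (fun i => (m i : ℚ)) with hφ
  set P := interpP N d φ with hP
  refine ⟨P, interpP_totalDegree N d φ, ?_⟩
  set h : (Fin N → ℚ) → ℚ := fun x => g x - MvPolynomial.eval x P with hh
  have hhd : FdegLE h d := by
    have : h = g - (fun x => MvPolynomial.eval x P) := rfl
    rw [this]
    exact fdegLE_sub hg (fdegLE_eval P (interpP_totalDegree N d φ))
  have hsimplex : ∀ m : Fin N → ℕ, ∑ i, m i ≤ d → h (fun i => (m i : ℚ)) = 0 := by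
    intro m hm
    rw [hh]
    simp only
    rw [interpP_eval N d φ m hm]
    simp [hφ]
  have hgrid := natGrid_zero d h hhd hsimplex
  have hall := ext_from_natGrid d h hhd hgrid
  intro x
  have := hall x
  rw [hh] at this
  simp only at this
  linarith [this]

end FdegAux

/-- **Functions `ℚ^N → ℚ` of finite functional degree are polynomial functions.**
A function `g : ℚ^N → ℚ` has finite functional degree iff it is given by a polynomial
`P ∈ ℚ[t_1, …, t_N]`; moreover if `fdeg g ≤ d` then `P` may be chosen with total degree
at most `d`. -/
theorem finite_fdeg_iff_polynomial_rat
    (N : ℕ) (hN : 1 ≤ N) (g : (Fin N → ℚ) → ℚ) :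
    ((∃ d : ℕ, FdegLE g d) ↔
      ∃ P : MvPolynomial (Fin N) ℚ, ∀ x, g x = MvPolynomial.eval x P) ∧
    (∀ d : ℕ, FdegLE g d →
      ∃ P : MvPolynomial (Fin N) ℚ, P.totalDegree ≤ d ∧ ∀ x, g x = MvPolynomial.eval x P) := by
  constructor
  · constructor
    · rintro ⟨d, hd⟩
      obtain ⟨P, _, hP⟩ := FdegAux.main_part2 N g d hd
      exact ⟨P, hP⟩
    · rintro ⟨P, hP⟩
      refine ⟨P.totalDegree, ?_⟩
      have : g = fun x => MvPolynomial.eval x P := funext hP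
      rw [this]
      exact FdegAux.fdegLE_eval P le_rfl
  · intro d hd
    exact FdegAux.main_part2 N g d hd
end

section
/- Let R be a commutative domain with fraction field K, let N ≥ 1, and let f ∈ K[t_1, …, t_N] be a polynomial such that f(x) ∈ R for every x ∈ R^N (an integer-valued polynomial on R). Let E_R(f) : R^N → R denote the induced function. Then fdeg(E_R(f)) ≤ deg(f). If moreover R has characteristic 0 and f ≠ 0, then fdeg(E_R(f)) = deg(f). -/
/-- The functional degree `fdeg f ∈ {-∞} ∪ ℕ ∪ {∞}` of `f : A → B`, namely
the supremum of the lengths of lists `[a_1, …, a_k]` with `Δ_{a_1} ⋯ Δ_{a_k} f ≠ 0`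
(with `sup ∅ = ⊥ = -∞`). -/
noncomputable def fdeg {A B : Type*} [AddCommGroup A] [AddCommGroup B] (f : A → B) :
    WithBot ℕ∞ :=
  sSup {d : WithBot ℕ∞ | ∃ l : List A, multiDisc l f ≠ 0 ∧ (l.length : WithBot ℕ∞) = d}

section basics
variable {A B : Type*} [AddCommGroup A] [AddCommGroup B]

lemma disc_zero_fun (a : A) : disc a (0 : A → B) = 0 := by
  funext x; simp [disc]

lemma multiDisc_zero_fun (l : List A) : multiDisc l (0 : A → B) = 0 := by
  induction l with
  | nil => rfl
  | cons a l ih => simp [multiDisc, ih, disc_zero_fun]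

lemma multiDisc_append (l₁ l₂ : List A) (f : A → B) :
    multiDisc (l₁ ++ l₂) f = multiDisc l₁ (multiDisc l₂ f) := by
  induction l₁ with
  | nil => rfl
  | cons a l ih => simp [multiDisc, ih]

lemma multiDisc_comp_addHom {B' : Type*} [AddCommGroup B'] (π : B →+ B') (l : List A) (f : A → B) :
    (fun x => π (multiDisc l f x)) = multiDisc l (fun x => π (f x)) := by
  induction l with
  | nil => rfl
  | cons a l ih => funext x; simp [multiDisc, disc, map_sub, ← ih]

end basics

open MvPolynomial

namespace Aux

variable {σ : Type*} {S : Type*} [CommRing S]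

/-- degree of a monomial exponent -/
def mdeg (m : σ →₀ ℕ) : ℕ := m.sum fun _ e => e

lemma mdeg_add (a b : σ →₀ ℕ) : mdeg (a + b) = mdeg a + mdeg b :=
  Finsupp.sum_add_index' (fun _ => rfl) (fun _ _ _ => rfl)

lemma mdeg_single (i : σ) (t : ℕ) : mdeg (Finsupp.single i t) = t :=
  Finsupp.sum_single_index rfl

lemma le_totalDegree' {p : MvPolynomial σ S} {k : σ →₀ ℕ} (h : k ∈ p.support) :
    mdeg k ≤ p.totalDegree := le_totalDegree h

/-- all coefficients in degrees `≥ n` vanish -/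
def DegLT (p : MvPolynomial σ S) (n : ℕ) : Prop :=
  ∀ k : σ →₀ ℕ, n ≤ mdeg k → coeff k p = 0

lemma degLT_of_totalDegree_lt {p : MvPolynomial σ S} {n : ℕ} (h : p.totalDegree < n) :
    DegLT p n := by
  intro k hk
  by_contra hc
  exact absurd (le_totalDegree' (mem_support_iff.2 hc)) (by omega)

lemma DegLT.mono {p : MvPolynomial σ S} {n n' : ℕ} (h : DegLT p n) (hn : n ≤ n') :
    DegLT p n' := fun k hk => h k (le_trans hn hk)

lemma totalDegree_le_of_degLT {p : MvPolynomial σ S} {n : ℕ} (h : DegLT p (n + 1)) :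
    p.totalDegree ≤ n := by
  apply Finset.sup_le
  intro k hk
  show mdeg k ≤ n
  by_contra hc
  exact (mem_support_iff.1 hk) (h k (by omega))

lemma DegLT.zero (n : ℕ) : DegLT (0 : MvPolynomial σ S) n := by
  intro k _; simp

lemma DegLT.add {p q : MvPolynomial σ S} {n : ℕ} (hp : DegLT p n) (hq : DegLT q n) :
    DegLT (p + q) n := by
  intro k hk; simp [coeff_add, hp k hk, hq k hk]

lemma DegLT.sub {p q : MvPolynomial σ S} {n : ℕ} (hp : DegLT p n) (hq : DegLT q n) :
    DegLT (p - q) n := by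
  intro k hk; simp [coeff_sub, hp k hk, hq k hk]

lemma DegLT.sum {ι : Type*} {s : Finset ι} {f : ι → MvPolynomial σ S} {n : ℕ}
    (h : ∀ i ∈ s, DegLT (f i) n) : DegLT (∑ i ∈ s, f i) n := by
  classical
  induction s using Finset.induction_on with
  | empty => simpa using DegLT.zero n
  | insert _ _ hni ih =>
      rename_i j s
      rw [Finset.sum_insert hni]
      exact (h j (Finset.mem_insert_self _ _)).add
        (ih fun i hi => h i (Finset.mem_insert_of_mem hi))

lemma degLT_mul_left {p q : MvPolynomial σ S} {a b : ℕ}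
    (hp : p.totalDegree ≤ a) (hq : DegLT q b) : DegLT (p * q) (a + b) := by
  classical
  intro k hk
  rw [coeff_mul]
  apply Finset.sum_eq_zero
  rintro ⟨u, v⟩ huv
  rw [Finset.HasAntidiagonal.mem_antidiagonal] at huv
  by_cases hu : coeff u p = 0
  · simp [hu]
  · have hud : mdeg u ≤ a := le_trans (le_totalDegree' (mem_support_iff.2 hu)) hp
    have : mdeg u + mdeg v = mdeg k := by rw [← mdeg_add, huv]
    have : b ≤ mdeg v := by omega
    simp [hq v this]

lemma degLT_mul_right {p q : MvPolynomial σ S} {a b : ℕ}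
    (hp : DegLT p a) (hq : q.totalDegree ≤ b) : DegLT (p * q) (a + b) := by
  rw [mul_comm, Nat.add_comm]
  exact degLT_mul_left hq hp

end Aux

namespace Aux
variable {σ : Type*} {S : Type*} [CommRing S]

lemma degLT_prod_sub_prod {ι : Type*} (s : Finset ι) (p q : ι → MvPolynomial σ S) (d : ι → ℕ)
    (hp : ∀ i ∈ s, (p i).totalDegree ≤ d i)
    (hq : ∀ i ∈ s, (q i).totalDegree ≤ d i)
    (hpq : ∀ i ∈ s, DegLT (p i - q i) (d i)) :
    DegLT ((∏ i ∈ s, p i) - ∏ i ∈ s, q i) (∑ i ∈ s, d i) := by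
  classical
  induction s using Finset.induction_on with
  | empty => simpa using DegLT.zero 0
  | insert _ _ hni ih =>
      rename_i j s
      rw [Finset.prod_insert hni, Finset.prod_insert hni, Finset.sum_insert hni]
      have key : p j * ∏ i ∈ s, p i - q j * ∏ i ∈ s, q i
          = p j * ((∏ i ∈ s, p i) - ∏ i ∈ s, q i) + (p j - q j) * ∏ i ∈ s, q i := by
        ring
      rw [key]
      have h1 : DegLT (p j * ((∏ i ∈ s, p i) - ∏ i ∈ s, q i)) (d j + ∑ i ∈ s, d i) :=
        degLT_mul_left (hp j (Finset.mem_insert_self _ _))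
          (ih (fun i hi => hp i (Finset.mem_insert_of_mem hi))
              (fun i hi => hq i (Finset.mem_insert_of_mem hi))
              (fun i hi => hpq i (Finset.mem_insert_of_mem hi)))
      have h2 : DegLT ((p j - q j) * ∏ i ∈ s, q i) (d j + ∑ i ∈ s, d i) :=
        degLT_mul_right (hpq j (Finset.mem_insert_self _ _))
          (le_trans (totalDegree_finset_prod s q)
            (Finset.sum_le_sum fun i hi => hq i (Finset.mem_insert_of_mem hi)))
      exact h1.add h2

lemma X_add_C_pow_eq (i : σ) (c : S) (n : ℕ) :
    (X i + C c) ^ n = ∑ t ∈ Finset.range (n + 1), X i ^ t * C (c ^ (n - t) * (n.choose t : S)) := by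
  rw [(Commute.all (X i) (C c)).add_pow]
  refine Finset.sum_congr rfl fun t _ => ?_
  rw [map_mul, map_pow, map_natCast C]
  ring

lemma totalDegree_X_pow_le (i : σ) (t : ℕ) :
    (X (R := S) i ^ t).totalDegree ≤ t := by
  rw [X_pow_eq_monomial]
  exact le_trans (totalDegree_monomial_le _ _) (by simp [mdeg, Finsupp.sum_single_index])

lemma degLT_X_add_C_pow_sub (i : σ) (c : S) (n : ℕ) :
    DegLT ((X i + C c) ^ n - X i ^ n) n := by
  rw [X_add_C_pow_eq, Finset.sum_range_succ]
  have : X (R := S) i ^ n * C (c ^ (n - n) * (n.choose n : S)) = X i ^ n := by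
    simp
  rw [this, add_sub_cancel_right]
  apply DegLT.sum
  intro t ht
  rw [Finset.mem_range] at ht
  apply degLT_of_totalDegree_lt
  calc (X (R := S) i ^ t * C (c ^ (n - t) * (n.choose t : S))).totalDegree
      ≤ (X (R := S) i ^ t).totalDegree + (C (c ^ (n - t) * (n.choose t : S)) :
          MvPolynomial σ S).totalDegree := totalDegree_mul _ _
    _ ≤ t := by
        rw [totalDegree_C, add_zero]
        exact totalDegree_X_pow_le i t
    _ < n := ht

end Aux

namespace Aux
variable {σ : Type*} {S : Type*} [CommRing S]

lemma totalDegree_X_add_C_pow_le (j : σ) (c : S) (n : ℕ) :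
    ((X j + C c) ^ n).totalDegree ≤ n := by
  refine le_trans (totalDegree_pow _ _) ?_
  have h1 : (X j + C c : MvPolynomial σ S).totalDegree ≤ 1 := by
    refine le_trans (totalDegree_add _ _) ?_
    simp only [totalDegree_C, max_le_iff]
    constructor
    · rw [← pow_one (X (R := S) j)]; exact totalDegree_X_pow_le j 1
    · omega
  calc n * (X j + C c : MvPolynomial σ S).totalDegree ≤ n * 1 := Nat.mul_le_mul_left n h1
    _ = n := Nat.mul_one n

lemma mdeg_eq_sum_support (m : σ →₀ ℕ) : mdeg m = ∑ j ∈ m.support, m j := rfl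

lemma degLT_pdisc_monomial (a : σ → S) (m : σ →₀ ℕ) (c : S) :
    DegLT (bind₁ (fun j => X j + C (a j)) (monomial m c) - monomial m c) (mdeg m) := by
  rw [bind₁_monomial, monomial_eq, Finsupp.prod, ← mul_sub]
  have := degLT_prod_sub_prod (S := S) m.support
      (fun j => (X j + C (a j)) ^ m j) (fun j => X j ^ m j) (fun j => m j)
      (fun j _ => totalDegree_X_add_C_pow_le j (a j) (m j))
      (fun j _ => totalDegree_X_pow_le j (m j))
      (fun j _ => degLT_X_add_C_pow_sub j (a j) (m j))
  rw [mdeg_eq_sum_support]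
  have h0 : (0 : ℕ) + ∑ j ∈ m.support, m j = ∑ j ∈ m.support, m j := by omega
  exact h0 ▸ degLT_mul_left (le_of_eq (totalDegree_C c)) this

lemma degLT_pdisc (a : σ → S) (p : MvPolynomial σ S) (n : ℕ) (hp : p.totalDegree ≤ n) :
    DegLT (bind₁ (fun j => X j + C (a j)) p - p) n := by
  conv_lhs => rw [p.as_sum, map_sum, ← Finset.sum_sub_distrib]
  exact DegLT.sum fun m hm =>
    (degLT_pdisc_monomial a m (coeff m p)).mono (le_trans (le_totalDegree' hm) hp)

lemma totalDegree_pdisc_le (a : σ → S) (p : MvPolynomial σ S) (n : ℕ)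
    (hp : p.totalDegree ≤ n + 1) :
    (bind₁ (fun j => X j + C (a j)) p - p).totalDegree ≤ n :=
  totalDegree_le_of_degLT (degLT_pdisc a p (n + 1) hp)

end Aux

namespace Aux
variable {σ : Type*} {S : Type*} [CommRing S] [DecidableEq σ]

lemma finsupp_ext_of_erase {i : σ} {k l : σ →₀ ℕ} (he : k.erase i = l.erase i)
    (hi : k i = l i) : k = l := by
  ext j
  by_cases hj : j = i
  · subst hj; exact hi
  · have := congrArg (fun f => f j) he
    simpa [Finsupp.erase_ne hj] using this

lemma mdeg_erase_add (i : σ) (k : σ →₀ ℕ) : mdeg k = mdeg (k.erase i) + k i := by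
  conv_lhs => rw [← Finsupp.erase_add_single i k]
  rw [mdeg_add, mdeg_single]

lemma bind₁_shifti_monomial (i : σ) (k : σ →₀ ℕ) (c : S) :
    bind₁ (fun j => X j + C (if j = i then (1 : S) else 0)) (monomial k c)
      = monomial (k.erase i) c * (X i + 1) ^ (k i) := by
  rw [bind₁_monomial]
  have herase : (monomial (k.erase i) c : MvPolynomial σ S)
      = C c * ∏ j ∈ k.support.erase i, X j ^ k j := by
    rw [monomial_eq, Finsupp.prod, Finsupp.support_erase]
    congr 1
    exact Finset.prod_congr rfl fun j hj =>
      by rw [Finsupp.erase_ne (Finset.ne_of_mem_erase hj)]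
  have hprod : ∏ j ∈ k.support, (X j + C (if j = i then (1 : S) else 0)) ^ k j
      = (∏ j ∈ k.support.erase i, X j ^ k j) * (X i + 1) ^ k i := by
    have hcong : ∀ s : Finset σ, i ∉ s →
        ∏ j ∈ s, (X j + C (if j = i then (1 : S) else 0)) ^ k j = ∏ j ∈ s, X j ^ k j :=
      fun s his => Finset.prod_congr rfl fun j hj => by
        rw [if_neg (fun h => his (by rw [← h]; exact hj)), map_zero, add_zero]
    by_cases hi : i ∈ k.support
    · rw [← Finset.mul_prod_erase _ _ hi, if_pos rfl, C_1, mul_comm,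
        hcong _ (Finset.notMem_erase i _)]
    · rw [Finset.erase_eq_of_notMem hi, Finsupp.notMem_support_iff.1 hi, pow_zero, mul_one,
        hcong _ hi]
  rw [hprod, herase]
  ring

lemma coeff_monomial_mul_X_add_one_pow (i : σ) (s m' : σ →₀ ℕ) (hs : s i = 0) (c : S) (n : ℕ) :
    coeff m' (monomial s c * (X i + 1) ^ n)
      = if s = m'.erase i ∧ m' i ≤ n then c * (n.choose (m' i) : S) else 0 := by
  have hone : (X i + 1 : MvPolynomial σ S) = X i + C 1 := by rw [C_1]
  rw [hone, X_add_C_pow_eq, Finset.mul_sum]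
  have hterm : ∀ t : ℕ, monomial s c * (X i ^ t * C ((1 : S) ^ (n - t) * (n.choose t : S)))
      = monomial (s + Finsupp.single i t) (c * (n.choose t : S)) := by
    intro t
    rw [X_pow_eq_monomial, one_pow, one_mul, ← mul_assoc, monomial_mul,
      mul_comm _ (C (n.choose t : S)), C_mul_monomial, mul_one, mul_comm (n.choose t : S) c]
  simp_rw [hterm]
  rw [coeff_sum]
  simp_rw [coeff_monomial]
  have hiff : ∀ t : ℕ, s + Finsupp.single i t = m' ↔ (s = m'.erase i ∧ t = m' i) := by
    intro t
    constructor
    · rintro rfl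
      constructor
      · rw [Finsupp.erase_add, Finsupp.erase_single, add_zero,
          Finsupp.erase_of_notMem_support (Finsupp.notMem_support_iff.2 hs)]
      · simp [hs]
    · rintro ⟨rfl, rfl⟩
      exact Finsupp.erase_add_single i m'
  by_cases hc : s = m'.erase i ∧ m' i ≤ n
  · rw [if_pos hc]
    rw [Finset.sum_eq_single (m' i)]
    · rw [if_pos ((hiff (m' i)).2 ⟨hc.1, rfl⟩)]
    · intro t _ hne
      rw [if_neg (fun h => hne ((hiff t).1 h).2)]
    · intro habs
      exact absurd (Finset.mem_range.2 (by omega)) habs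
  · rw [if_neg hc]
    apply Finset.sum_eq_zero
    intro t ht
    rw [Finset.mem_range] at ht
    rw [if_neg]
    intro h
    obtain ⟨h1, h2⟩ := (hiff t).1 h
    exact hc ⟨h1, by omega⟩

end Aux

namespace Aux
variable {σ : Type*} {S : Type*} [CommRing S] [DecidableEq σ]

lemma coeff_step (i : σ) (m : σ →₀ ℕ) (hmi : m i ≠ 0) (p : MvPolynomial σ S)
    (hdeg : p.totalDegree ≤ mdeg m) :
    coeff (m - Finsupp.single i 1) (bind₁ (fun j => X j + C (if j = i then (1 : S) else 0)) p - p)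
      = (m i : S) * coeff m p := by
  set m' := m - Finsupp.single i 1 with hm'
  have hm'i : m' i = m i - 1 := by rw [hm', Finsupp.tsub_apply, Finsupp.single_eq_same]
  have hm'erase : m'.erase i = m.erase i := by
    ext j
    by_cases hj : j = i
    · subst hj; simp [Finsupp.erase_same]
    · rw [Finsupp.erase_ne hj, Finsupp.erase_ne hj, hm', Finsupp.tsub_apply,
        Finsupp.single_eq_of_ne hj, Nat.sub_zero]
  have hmm' : m' + Finsupp.single i 1 = m := by
    ext j
    by_cases hj : j = i
    · subst hj
      rw [Finsupp.add_apply, hm'i, Finsupp.single_eq_same]; omega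
    · rw [Finsupp.add_apply, Finsupp.single_eq_of_ne hj, add_zero, hm',
        Finsupp.tsub_apply, Finsupp.single_eq_of_ne hj, Nat.sub_zero]
  have hdegm : mdeg m = mdeg m' + 1 := by
    conv_lhs => rw [← hmm']
    rw [mdeg_add, mdeg_single]
  have hne : m ≠ m' := by
    intro h
    have := hm'i
    rw [← h] at this
    omega
  -- compute coeff m' (bind₁ shift p)
  have hbind : coeff m' (bind₁ (fun j => X j + C (if j = i then (1 : S) else 0)) p)
      = coeff m' p + (m i : S) * coeff m p := by
    conv_lhs => rw [p.as_sum, map_sum, coeff_sum]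
    have hterm : ∀ k ∈ p.support,
        coeff m' (bind₁ (fun j => X j + C (if j = i then (1 : S) else 0))
          (monomial k (coeff k p)))
        = (if k = m' then coeff m' p else 0) + (if k = m then (m i : S) * coeff m p else 0) := by
      intro k hk
      rw [bind₁_shifti_monomial, coeff_monomial_mul_X_add_one_pow i _ m'
        (by simp [Finsupp.erase_same]) _ _]
      have hdk : mdeg k ≤ mdeg m := le_trans (le_totalDegree' hk) hdeg
      by_cases h1 : k = m'
      · subst h1
        rw [if_pos ⟨rfl, le_refl _⟩, if_pos rfl, if_neg (fun h => hne h.symm),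
          Nat.choose_self, Nat.cast_one, mul_one, add_zero]
      · by_cases h2 : k = m
        · subst h2
          have hcond : k.erase i = m'.erase i ∧ m' i ≤ k i := by
            constructor
            · rw [hm'erase]
            · omega
          have hchoose : (k i).choose (m' i) = k i := by
            have h8 := Nat.choose_symm (show 1 ≤ k i by omega)
            have h9 : k i - 1 = m' i := hm'i.symm
            rw [h9] at h8
            rw [h8, Nat.choose_one_right]
          rw [if_pos hcond, if_neg h1, if_pos rfl, zero_add, hchoose, mul_comm]
        · rw [if_neg, if_neg h1, if_neg h2, add_zero]
          rintro ⟨he, hle⟩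
          have h3 : mdeg k = mdeg (m'.erase i) + k i := by rw [← he, ← mdeg_erase_add]
          have h4 : mdeg m' = mdeg (m'.erase i) + m' i := mdeg_erase_add i m'
          have hki : k i ≤ m' i + 1 := by omega
          rcases Nat.lt_or_ge (k i) (m' i + 1) with h5 | h5
          · exact h1 (finsupp_ext_of_erase he (by omega))
          · exact h2 (finsupp_ext_of_erase (by rw [he, hm'erase]) (by omega))
    rw [Finset.sum_congr rfl hterm, Finset.sum_add_distrib, Finset.sum_ite_eq' p.support m',
      Finset.sum_ite_eq' p.support m]
    have e1 : (if m' ∈ p.support then coeff m' p else 0) = coeff m' p := by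
      by_cases h : m' ∈ p.support
      · rw [if_pos h]
      · rw [if_neg h]
        exact (notMem_support_iff.1 h).symm
    have e2 : (if m ∈ p.support then (m i : S) * coeff m p else 0) = (m i : S) * coeff m p := by
      by_cases h : m ∈ p.support
      · rw [if_pos h]
      · rw [if_neg h]
        rw [notMem_support_iff.1 h]
        ring
    rw [e1, e2]
  rw [coeff_sub, hbind]
  ring

end Aux

namespace Aux
variable {σ : Type*} {S : Type*} [CommRing S] [DecidableEq σ]

lemma sub_single_add {i : σ} {m : σ →₀ ℕ} (h : m i ≠ 0) :
    (m - Finsupp.single i 1) + Finsupp.single i 1 = m := by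
  ext j
  by_cases hj : j = i
  · subst hj
    simp only [Finsupp.add_apply, Finsupp.tsub_apply, Finsupp.single_eq_same]
    omega
  · rw [Finsupp.add_apply, Finsupp.tsub_apply, Finsupp.single_eq_of_ne hj,
      Nat.sub_zero, add_zero]

lemma mdeg_sub_single {i : σ} {m : σ →₀ ℕ} (h : m i ≠ 0) :
    mdeg (m - Finsupp.single i 1) + 1 = mdeg m := by
  conv_rhs => rw [← sub_single_add h]
  rw [mdeg_add, mdeg_single]

omit [DecidableEq σ] in
lemma eq_C_of_totalDegree_le_zero {p : MvPolynomial σ S} (h : p.totalDegree ≤ 0) :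
    p = C (coeff 0 p) := by
  classical
  have h0 := (totalDegree_eq_zero_iff σ p).1 (le_antisymm h (Nat.zero_le _))
  apply MvPolynomial.ext
  intro k
  rw [coeff_C]
  by_cases hk : k = 0
  · subst hk; rw [if_pos rfl]
  · rw [if_neg (fun h => hk h.symm)]
    by_contra hc
    exact hk (Finsupp.ext fun x => h0 k (mem_support_iff.2 hc) x)

omit [DecidableEq σ] in
lemma mdeg_eq_zero {m : σ →₀ ℕ} (h : mdeg m = 0) : m = 0 := by
  apply Finsupp.ext
  intro j
  simp only [Finsupp.coe_zero, Pi.zero_apply]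
  by_contra hj
  have hjs : j ∈ m.support := Finsupp.mem_support_iff.2 hj
  have : m j ≤ mdeg m := by
    rw [mdeg_eq_sum_support]
    exact Finset.single_le_sum (fun _ _ => Nat.zero_le _) hjs
  omega

end Aux

section RK
open Aux
variable {R : Type*} [CommRing R] {N : ℕ} {K : Type*} [CommRing K] [Algebra R K]

/-- The function on `R^N` with values in `K` induced by a polynomial. -/
noncomputable def Gfun (p : MvPolynomial (Fin N) (K)) : (Fin N → R) → K :=
  fun x => eval (fun i => algebraMap R (K) (x i)) p

lemma Gfun_C (c : K) : Gfun (N := N) (R := R) (K := K) (C c) = fun _ => c := by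
  funext x; simp [Gfun]

lemma disc_Gfun (a : Fin N → R) (p : MvPolynomial (Fin N) (K)) :
    disc a (Gfun p) = Gfun
      (bind₁ (fun j => X j + C (algebraMap R (K) (a j))) p - p) := by
  funext x
  simp only [Gfun, disc, map_sub]
  congr 1
  rw [show (eval (fun i => algebraMap R (K) (x i)))
      ((bind₁ (fun j => X j + C (algebraMap R (K) (a j)))) p)
    = eval (fun i => eval (fun i => algebraMap R (K) (x i))
        (X i + C (algebraMap R (K) (a i)))) p from eval₂Hom_bind₁ _ _ _ _]
  have harg : (fun i => eval (fun i => algebraMap R (K) (x i))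
      (X i + C (algebraMap R (K) (a i))))
      = fun i => algebraMap R (K) ((x + a) i) := by
    funext i
    simp [Pi.add_apply, map_add]
  rw [harg]

lemma disc_const (a : Fin N → R) (c : K) :
    disc a (fun _ : Fin N → R => c) = 0 := by
  funext x; simp [disc]

lemma upper_bound (d : ℕ) (p : MvPolynomial (Fin N) (K)) (hp : p.totalDegree ≤ d)
    (l : List (Fin N → R)) (hl : l.length = d + 1) : multiDisc l (Gfun p) = 0 := by
  induction d generalizing p l with
  | zero =>
      obtain ⟨a, rfl⟩ := List.length_eq_one_iff.1 hl
      show disc a (multiDisc [] (Gfun p)) = 0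
      rw [show multiDisc [] (Gfun p) = Gfun p from rfl, eq_C_of_totalDegree_le_zero hp, Gfun_C]
      exact disc_const a _
  | succ d ih =>
      have hne : l ≠ [] := by intro h; rw [h] at hl; simp at hl
      have hsplit : l.dropLast ++ [l.getLast hne] = l := List.dropLast_append_getLast hne
      rw [← hsplit, multiDisc_append]
      have h1 : multiDisc [l.getLast hne] (Gfun p) = disc (l.getLast hne) (Gfun p) := rfl
      rw [h1, disc_Gfun]
      apply ih
      · exact totalDegree_pdisc_le _ p d hp
      · simp only [List.length_dropLast, hl]
        omega

lemma lower_bound (n : ℕ) (m : Fin N →₀ ℕ) (p : MvPolynomial (Fin N) (K))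
    (hm : mdeg m = n) (hp : p.totalDegree ≤ n) :
    ∃ (l : List (Fin N → R)) (c : ℕ), l.length = n ∧ 0 < c ∧
      multiDisc l (Gfun p) = fun _ => (c : K) * coeff m p := by
  induction n generalizing m p with
  | zero =>
      refine ⟨[], 1, rfl, Nat.one_pos, ?_⟩
      rw [mdeg_eq_zero hm]
      show Gfun p = _
      conv_lhs => rw [eq_C_of_totalDegree_le_zero hp]
      rw [Gfun_C]
      funext x
      rw [Nat.cast_one, one_mul]
  | succ n ih =>
      -- find i with m i ≠ 0
      have hm0 : m ≠ 0 := by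
        intro h; rw [h] at hm; simp [mdeg, Finsupp.sum_zero_index] at hm
      obtain ⟨i, hi⟩ : ∃ i, m i ≠ 0 := by
        by_contra hc
        push_neg at hc
        exact hm0 (Finsupp.ext fun j => hc j)
      set ei : Fin N → R := fun j => if j = i then 1 else 0 with hei
      have heival : ∀ j, algebraMap R (K) (ei j)
          = (if j = i then (1 : K) else 0) := by
        intro j; by_cases hj : j = i <;> simp [hei, hj]
      set q := bind₁ (fun j => X j + C (if j = i then (1 : K) else 0)) p - p
        with hqdef
      have hqdeg : q.totalDegree ≤ n :=
        totalDegree_pdisc_le (fun j => if j = i then (1 : K) else 0) p n hp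
      set m' := m - Finsupp.single i 1 with hm'def
      have hm'deg : mdeg m' = n := by
        have h7 := mdeg_sub_single (m := m) hi
        rw [← hm'def] at h7
        omega
      have hcoeff : coeff m' q = (m i : K) * coeff m p :=
        coeff_step i m hi p (by rw [hm]; exact hp)
      obtain ⟨l', c', hl'len, hc'pos, hl'⟩ := ih m' q hm'deg hqdeg
      have hGq : disc ei (Gfun p) = Gfun q := by
        rw [disc_Gfun ei p, hqdef]
        have harg : (fun j => X j + C (algebraMap R K (ei j)))
            = fun j => X j + (C (if j = i then (1 : K) else 0)) := by
          funext j
          rw [heival j]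
        rw [harg]
      refine ⟨l' ++ [ei], c' * m i, ?_, ?_, ?_⟩
      · simp [hl'len]
      · exact Nat.mul_pos hc'pos (Nat.pos_of_ne_zero hi)
      · rw [multiDisc_append]
        have h1 : multiDisc [ei] (Gfun p) = disc ei (Gfun p) := rfl
        rw [h1, hGq, hl']
        funext x
        rw [hcoeff]
        push_cast
        ring

end RK

open Aux in
/-- **Functional degree of integer-valued polynomials.** Let `R` be a commutative domain
with fraction field `K`, and let `f ∈ K[t_1, …, t_N]` be integer-valued on `R^N`. If
`g : R^N → R` is the induced function, then `fdeg g ≤ deg f`, with equality when `R` has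
characteristic `0` and `f ≠ 0`. -/
theorem fdeg_of_integer_valued_polynomial
    (R : Type*) [CommRing R] [IsDomain R] (N : ℕ) (hN : 1 ≤ N)
    (f : MvPolynomial (Fin N) (FractionRing R))
    (hint : ∀ x : Fin N → R,
      MvPolynomial.eval (fun i => algebraMap R (FractionRing R) (x i)) f
        ∈ Set.range (algebraMap R (FractionRing R)))
    (g : (Fin N → R) → R)
    (hg : ∀ x : Fin N → R, algebraMap R (FractionRing R) (g x) =
      MvPolynomial.eval (fun i => algebraMap R (FractionRing R) (x i)) f) :
    fdeg g ≤ ((f.totalDegree : ℕ∞) : WithBot ℕ∞) ∧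
    (CharZero R → f ≠ 0 → fdeg g = ((f.totalDegree : ℕ∞) : WithBot ℕ∞)) := by
  classical
  have hinj : Function.Injective (algebraMap R (FractionRing R)) :=
    IsFractionRing.injective R (FractionRing R)
  have htrans : ∀ l : List (Fin N → R),
      (fun x => algebraMap R (FractionRing R) (multiDisc l g x)) = multiDisc l (Gfun f) := by
    intro l
    have h0 : (fun x : Fin N → R => algebraMap R (FractionRing R) (g x)) = Gfun f :=
      funext hg
    exact (multiDisc_comp_addHom ((algebraMap R (FractionRing R)).toAddMonoidHom) l g).trans
      (congrArg (multiDisc l) h0)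
  have hzero_iff : ∀ l : List (Fin N → R),
      multiDisc l g = 0 ↔ multiDisc l (Gfun f) = 0 := by
    intro l
    constructor
    · intro h
      rw [← htrans l, h]
      funext x
      simp
    · intro h
      funext x
      apply hinj
      have h1 := congrFun (htrans l) x
      rw [h1, h]
      simp
  have hlen_le : ∀ l : List (Fin N → R), multiDisc l g ≠ 0 → l.length ≤ f.totalDegree := by
    intro l hl
    by_contra hgt
    push_neg at hgt
    have hdrop : (l.drop (l.length - (f.totalDegree + 1))).length = f.totalDegree + 1 := by
      rw [List.length_drop]
      omega
    have h2 : multiDisc (l.drop (l.length - (f.totalDegree + 1))) g = 0 :=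
      (hzero_iff _).2 (upper_bound f.totalDegree f le_rfl _ hdrop)
    have h3 : l = l.take (l.length - (f.totalDegree + 1))
        ++ l.drop (l.length - (f.totalDegree + 1)) := (List.take_append_drop _ l).symm
    rw [h3, multiDisc_append, h2, multiDisc_zero_fun] at hl
    exact hl rfl
  have hA : fdeg g ≤ ((f.totalDegree : ℕ∞) : WithBot ℕ∞) := by
    apply sSup_le
    rintro b ⟨l, hl, rfl⟩
    have hle := hlen_le l hl
    rw [← WithBot.coe_natCast]
    exact WithBot.coe_le_coe.2 (Nat.cast_le.2 hle)
  refine ⟨hA, fun hchar hf0 => ?_⟩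
  haveI := hchar
  haveI : CharZero (FractionRing R) := inferInstance
  refine le_antisymm hA ?_
  obtain ⟨m, hmem, hmdeg⟩ := Finset.exists_mem_eq_sup f.support
    (by rw [Finset.nonempty_iff_ne_empty, Ne, MvPolynomial.support_eq_empty]; exact hf0)
    (fun m => mdeg m)
  have hmdeg' : mdeg m = f.totalDegree := hmdeg.symm
  obtain ⟨l, c, hlen, hcpos, hval⟩ := lower_bound (R := R) f.totalDegree m f hmdeg' le_rfl
  apply le_sSup
  refine ⟨l, ?_, ?_⟩
  · intro h0
    have h1 := (hzero_iff l).1 h0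
    rw [hval] at h1
    have h5 := congrFun h1 (fun _ => 0)
    simp only [Pi.zero_apply] at h5
    have hc0 : (c : FractionRing R) ≠ 0 := Nat.cast_ne_zero.2 hcpos.ne'
    have hcoeff0 : MvPolynomial.coeff m f ≠ 0 := MvPolynomial.mem_support_iff.1 hmem
    exact mul_ne_zero hc0 hcoeff0 h5
  · rw [hlen, ← WithBot.coe_natCast]
end

section
/- Let N ≥ 1 and let f : ℤ^N → ℤ be a function. Then f has finite functional degree if and only if there exists a polynomial P ∈ ℚ[t_1, …, t_N] such that f(x) = P(x_1, …, x_N) for every x ∈ ℤ^N (in particular P takes integer values on ℤ^N). That is, the functions ℤ^N → ℤ of finite functional degree are exactly the restrictions to ℤ^N of integer-valued polynomials. -/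
noncomputable def binQ (j : ℕ) (t : ℚ) : ℚ :=
  (∏ i ∈ Finset.range j, (t - i)) / (j.factorial : ℚ)

namespace FDAux

variable {A B B' C : Type*} [AddCommGroup A] [AddCommGroup B] [AddCommGroup B'] [AddCommGroup C]

lemma disc_zero (a : A) : disc a (0 : A → B) = 0 := by funext x; simp [disc]

lemma multiDisc_zero (l : List A) : multiDisc l (0 : A → B) = 0 := by
  induction l with
  | nil => rfl
  | cons a l ih => simp [multiDisc, ih, disc_zero]

lemma multiDisc_append (l₁ l₂ : List A) (f : A → B) :
    multiDisc (l₁ ++ l₂) f = multiDisc l₁ (multiDisc l₂ f) := by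
  induction l₁ with
  | nil => rfl
  | cons a l ih => simp [multiDisc, ih]

lemma fdegLE_long {f : A → B} {d : ℕ} (h : FdegLE f d) (l : List A)
    (hl : d + 1 ≤ l.length) : multiDisc l f = 0 := by
  have hsplit : l = l.take (l.length - (d+1)) ++ l.drop (l.length - (d+1)) :=
    (List.take_append_drop _ _).symm
  rw [hsplit, multiDisc_append, h _ (by simp [List.length_drop]; omega), multiDisc_zero]

lemma multiDisc_comp (φ : B →+ B') (l : List A) (f : A → B) :
    multiDisc l (fun x => φ (f x)) = fun x => φ (multiDisc l f x) := by
  induction l with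
  | nil => rfl
  | cons a l ih => funext x; simp [multiDisc, disc, ih, map_sub]

lemma multiDisc_comp_add (ι : C →+ A) (c : A) (l : List C) (F : A → B) :
    multiDisc l (fun x => F (ι x + c)) = fun x => multiDisc (l.map ι) F (ι x + c) := by
  induction l with
  | nil => rfl
  | cons a l ih =>
    funext x
    have h1 : ι (x + a) + c = (ι x + c) + ι a := by rw [map_add]; abel
    simp only [multiDisc, disc, List.map_cons, ih, h1]




lemma binQ_zero (t : ℚ) : binQ 0 t = 1 := by simp [binQ]

lemma binQ_at_zero {j : ℕ} (hj : 0 < j) : binQ j 0 = 0 := by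
  have : (∏ i ∈ Finset.range j, ((0:ℚ) - i)) = 0 :=
    Finset.prod_eq_zero (Finset.mem_range.2 hj) (by simp)
  rw [binQ, this, zero_div]

lemma binQ_pascal (j : ℕ) (t : ℚ) : binQ (j+1) (t+1) - binQ (j+1) t = binQ j t := by
  have hA : (∏ i ∈ Finset.range (j+1), (t + 1 - i))
      = (∏ i ∈ Finset.range j, (t - i)) * (t + 1) := by
    rw [Finset.prod_range_succ']
    congr 1
    · apply Finset.prod_congr rfl
      intro i _
      push_cast
      ring
    · simp
  have hB : (∏ i ∈ Finset.range (j+1), (t - i))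
      = (∏ i ∈ Finset.range j, (t - i)) * (t - j) := Finset.prod_range_succ _ _
  have hfac : ((j+1).factorial : ℚ) = (j+1) * (j.factorial : ℚ) := by
    rw [Nat.factorial_succ]; push_cast; ring
  have h1 : (j.factorial : ℚ) ≠ 0 := Nat.cast_ne_zero.2 j.factorial_ne_zero
  have h2 : ((j:ℚ)+1) ≠ 0 := by positivity
  rw [binQ, binQ, binQ, hA, hB, hfac]
  field_simp
  ring

noncomputable def Dn (j : ℕ) (f : ℤ → ℚ) : ℤ → ℚ := multiDisc (List.replicate j (1:ℤ)) f

lemma Dn_zero (f : ℤ → ℚ) : Dn 0 f = f := rfl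

lemma Dn_succ (j : ℕ) (f : ℤ → ℚ) : Dn (j+1) f = Dn j (disc 1 f) := by
  rw [Dn, List.replicate_succ', multiDisc_append]
  rfl

lemma const_of_disc_one {f : ℤ → ℚ} (h : disc 1 f = 0) : ∀ t : ℤ, f t = f 0 := by
  have h' : ∀ s : ℤ, f (s + 1) = f s := by
    intro s
    have := congrFun h s
    simp only [disc, Pi.zero_apply, sub_eq_zero] at this
    exact this
  intro t
  induction t using Int.induction_on with
  | zero => rfl
  | succ k ih => rw [h' k, ih]
  | pred k ih => rw [← ih, ← h' (-(k:ℤ) - 1)]; ring_nf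

lemma ext_of_disc_one {f g : ℤ → ℚ} (h0 : f 0 = g 0)
    (hd : ∀ t, disc 1 f t = disc 1 g t) : ∀ t, f t = g t := by
  have : ∀ t, (f t - g t) = (f 0 - g 0) := by
    apply const_of_disc_one
    funext s
    have := hd s
    simp only [disc] at this ⊢
    simp only [Pi.zero_apply]
    linarith
  intro t
  have := this t
  rw [h0] at this
  linarith

lemma newton : ∀ (d : ℕ) (f : ℤ → ℚ), Dn (d+1) f = 0 →
    ∀ t : ℤ, f t = ∑ j ∈ Finset.range (d+1), Dn j f 0 * binQ j (t : ℚ) := by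
  intro d
  induction d with
  | zero =>
    intro f hf t
    have h1 : disc 1 f = 0 := hf
    rw [const_of_disc_one h1 t]
    simp [Dn_zero, binQ_zero]
  | succ d ih =>
    intro f hf t
    have hg : Dn (d+1) (disc 1 f) = 0 := by rw [← Dn_succ]; exact hf
    have ihg := ih (disc 1 f) hg
    refine ext_of_disc_one (f := f) (g := fun t : ℤ => ∑ j ∈ Finset.range (d+2), Dn j f 0 * binQ j (t:ℚ)) ?_ ?_ t
    · -- f 0 = sum at 0
      show f 0 = ∑ j ∈ Finset.range (d+2), Dn j f 0 * binQ j (((0:ℤ)):ℚ)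
      rw [Finset.sum_eq_single_of_mem 0 (Finset.mem_range.2 (Nat.succ_pos _))
        (fun j _ hj => by
          rw [show (((0:ℤ)):ℚ) = 0 by norm_num, binQ_at_zero (Nat.pos_of_ne_zero hj)]
          ring)]
      simp [Dn_zero, binQ_zero]
    · intro s
      have hdS : disc 1 (fun t : ℤ => ∑ j ∈ Finset.range (d+2), Dn j f 0 * binQ j (t:ℚ)) s
          = ∑ j ∈ Finset.range (d+1), Dn (j+1) f 0 * binQ j (s:ℚ) := by
        simp only [disc]
        rw [← Finset.sum_sub_distrib]
        rw [Finset.sum_range_succ']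
        have h0term : Dn 0 f 0 * binQ 0 ((s:ℚ)+1) - Dn 0 f 0 * binQ 0 (s:ℚ) = 0 := by
          rw [binQ_zero, binQ_zero]; ring
        have hcast : ((s+1 : ℤ) : ℚ) = (s:ℚ) + 1 := by push_cast; ring
        simp only [hcast]
        rw [h0term, add_zero]
        apply Finset.sum_congr rfl
        intro j _
        rw [← mul_sub, binQ_pascal]
      rw [hdS]
      have : ∀ j, Dn (j+1) f 0 = Dn j (disc 1 f) 0 := by intro j; rw [Dn_succ]
      simp only [this]
      rw [← ihg s]


lemma cons_add_cons {N : ℕ} (a b : ℤ) (y z : Fin N → ℤ) :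
    (Fin.cons a y + Fin.cons b z : Fin (N+1) → ℤ) = Fin.cons (a+b) (y+z) := by
  funext i
  refine Fin.cases ?_ ?_ i <;> simp

lemma hardQ : ∀ (N : ℕ) (f : (Fin N → ℤ) → ℚ) (d : ℕ),
    (∀ l : List (Fin N → ℤ), l.length = d + 1 → multiDisc l f = 0) →
    ∃ P : MvPolynomial (Fin N) ℚ,
      ∀ x : Fin N → ℤ, f x = MvPolynomial.eval (fun i => (x i : ℚ)) P := by
  intro N
  induction N with
  | zero =>
    intro f d _
    refine ⟨MvPolynomial.C (f 0), fun x => ?_⟩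
    have : x = 0 := funext fun i => i.elim0
    rw [this]
    simp
  | succ N IH =>
    intro f d hf
    set e1 : Fin (N+1) → ℤ := Fin.cons 1 0 with he1
    -- additive homs
    let ιt : (Fin N → ℤ) →+ (Fin (N+1) → ℤ) :=
      AddMonoidHom.mk' (fun y => Fin.cons 0 y) (by
        intro y z; rw [cons_add_cons, zero_add])
    let ι₂ : ℤ →+ (Fin (N+1) → ℤ) :=
      AddMonoidHom.mk' (fun s => Fin.cons s 0) (by
        intro s s'; rw [cons_add_cons, add_zero])
    set g : ℕ → (Fin N → ℤ) → ℚ :=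
      fun j y => multiDisc (List.replicate j e1) f (Fin.cons 0 y) with hgdef
    have hg : ∀ j, ∀ l : List (Fin N → ℤ), l.length = d + 1 → multiDisc l (g j) = 0 := by
      intro j l hl
      have hcomp := multiDisc_comp_add ιt 0 l (multiDisc (List.replicate j e1) f)
      have hgj : g j = fun y => multiDisc (List.replicate j e1) f (ιt y + 0) := by
        funext y; simp [hgdef, ιt]
      rw [hgj, hcomp]
      have hlong : multiDisc (l.map ιt ++ List.replicate j e1) f = 0 := by
        apply fdegLE_long hf
        simp [hl]
      rw [← multiDisc_append, hlong]
      rfl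
    choose Q hQ using fun j => IH (g j) d (hg j)
    classical
    refine ⟨∑ j ∈ Finset.range (d+1),
        (MvPolynomial.C ((j.factorial : ℚ)⁻¹) *
          ∏ i ∈ Finset.range j, (MvPolynomial.X 0 - MvPolynomial.C (i:ℚ))) *
        MvPolynomial.rename Fin.succ (Q j), fun x => ?_⟩
    set t : ℤ := x 0 with ht
    set y : Fin N → ℤ := Fin.tail x with hy
    set h : ℤ → ℚ := fun s => f (Fin.cons s y) with hh
    have hcons : ∀ s : ℤ, (Fin.cons s y : Fin (N+1) → ℤ) = ι₂ s + Fin.cons 0 y := by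
      intro s
      show (Fin.cons s y : Fin (N+1) → ℤ) = Fin.cons s (0 : Fin N → ℤ) + Fin.cons (0:ℤ) y
      rw [cons_add_cons, add_zero, zero_add]
    have hDn : ∀ j s, Dn j h s = multiDisc (List.replicate j e1) f (Fin.cons s y) := by
      intro j s
      have hcomp := multiDisc_comp_add ι₂ (Fin.cons 0 y) (List.replicate j (1:ℤ)) f
      have hmap : (List.replicate j (1:ℤ)).map ι₂ = List.replicate j e1 := by
        rw [List.map_replicate]; rfl
      have hh' : h = fun s => f (ι₂ s + Fin.cons 0 y) := by
        funext s; rw [hh]; simp only; rw [hcons s]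
      rw [Dn, hh', hcomp, hmap]
      exact congrArg (multiDisc (List.replicate j e1) f) (hcons s).symm
    have hzero : Dn (d+1) h = 0 := by
      funext s
      rw [hDn]
      have := hf (List.replicate (d+1) e1) (by simp)
      rw [this]
      rfl
    have hnewt := newton d h hzero t
    have hfx : f x = h t := by rw [hh]; simp only; rw [hy, ht, Fin.cons_self_tail]
    rw [hfx, hnewt]
    rw [map_sum]
    apply Finset.sum_congr rfl
    intro j _
    have hDn0 : Dn j h 0 = g j y := by rw [hDn, hgdef]
    rw [hDn0, hQ j y]
    rw [map_mul, map_mul, MvPolynomial.eval_C, map_prod]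
    have heval : MvPolynomial.eval (fun i => ((x i : ℚ)))
        (MvPolynomial.rename Fin.succ (Q j)) = MvPolynomial.eval (fun i => ((y i : ℚ))) (Q j) := by
      rw [MvPolynomial.eval_rename]
      congr 1
    have hprod : (∏ i ∈ Finset.range j,
        MvPolynomial.eval (fun i => ((x i : ℚ))) (MvPolynomial.X 0 - MvPolynomial.C (i:ℚ)))
        = ∏ i ∈ Finset.range j, ((t:ℚ) - i) := by
      apply Finset.prod_congr rfl
      intro i _
      simp [ht]
    rw [heval, hprod, binQ]
    field_simp

end FDAux
namespace FDAux2
open MvPolynomial Finset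

variable {N : ℕ}

lemma pow_sub_deg (i : Fin N) (b : ℚ) {n : ℕ} (hn : 1 ≤ n) :
    ((X i + C b)^n - (X i)^n : MvPolynomial (Fin N) ℚ).totalDegree < n := by
  rw [add_pow]
  rw [Finset.sum_range_succ]
  have hlast : (X i : MvPolynomial (Fin N) ℚ)^n * C b ^ (n - n) * (n.choose n : MvPolynomial (Fin N) ℚ)
      = X i ^ n := by simp
  rw [hlast, add_sub_cancel_right]
  calc (∑ k ∈ Finset.range n, (X i : MvPolynomial (Fin N) ℚ)^k * C b ^ (n-k) * (n.choose k : MvPolynomial (Fin N) ℚ)).totalDegree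
      ≤ (Finset.range n).sup (fun k => ((X i : MvPolynomial (Fin N) ℚ)^k * C b ^ (n-k) * (n.choose k : MvPolynomial (Fin N) ℚ)).totalDegree) :=
        totalDegree_finset_sum _ _
    _ < n := by
        apply Finset.sup_lt_iff (by simp only [bot_eq_zero]; omega) |>.2
        intro k hk
        have h1 : ((X i : MvPolynomial (Fin N) ℚ)^k * C b ^ (n-k) * (n.choose k : MvPolynomial (Fin N) ℚ)).totalDegree
            ≤ ((X i : MvPolynomial (Fin N) ℚ)^k * C b ^ (n-k)).totalDegree
              + ((n.choose k : MvPolynomial (Fin N) ℚ)).totalDegree := totalDegree_mul _ _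
        have h2 : ((X i : MvPolynomial (Fin N) ℚ)^k * C b ^ (n-k)).totalDegree
            ≤ ((X i : MvPolynomial (Fin N) ℚ)^k).totalDegree + ((C b ^ (n-k) : MvPolynomial (Fin N) ℚ)).totalDegree := totalDegree_mul _ _
        have h3 : ((X i : MvPolynomial (Fin N) ℚ)^k).totalDegree = k := totalDegree_X_pow _ _
        have h4 : ((C b ^ (n-k) : MvPolynomial (Fin N) ℚ)).totalDegree = 0 := by
          rw [← C_pow]; exact totalDegree_C _
        have h5 : ((n.choose k : ℕ) : MvPolynomial (Fin N) ℚ).totalDegree = 0 := by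
          rw [← C_eq_coe_nat]; exact totalDegree_C _
        have hk' : k < n := Finset.mem_range.1 hk
        omega

lemma prod_sub_deg (s : Finset (Fin N)) (u : Fin N → ℕ) (b : Fin N → ℚ) :
    ((∏ i ∈ s, (X i + C (b i))^(u i)) - ∏ i ∈ s, (X i)^(u i) : MvPolynomial (Fin N) ℚ) = 0 ∨
    ((∏ i ∈ s, (X i + C (b i))^(u i)) - ∏ i ∈ s, (X i)^(u i) : MvPolynomial (Fin N) ℚ).totalDegree
      < ∑ i ∈ s, u i := by
  classical
  induction s using Finset.induction_on with
  | empty => left; simp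
  | @insert i s' hi ih =>
    rw [Finset.prod_insert hi, Finset.prod_insert hi, Finset.sum_insert hi]
    set A : MvPolynomial (Fin N) ℚ := (X i + C (b i))^(u i) with hA
    set A₀ : MvPolynomial (Fin N) ℚ := (X i)^(u i) with hA0
    set B : MvPolynomial (Fin N) ℚ := ∏ j ∈ s', (X j + C (b j))^(u j) with hB
    set B₀ : MvPolynomial (Fin N) ℚ := ∏ j ∈ s', (X j)^(u j) with hB0
    have key : A * B - A₀ * B₀ = (A - A₀) * B + A₀ * (B - B₀) := by ring
    have hdB : B.totalDegree ≤ ∑ j ∈ s', u j := by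
      refine le_trans (totalDegree_finset_prod _ _) (Finset.sum_le_sum ?_)
      intro j _
      refine le_trans (totalDegree_pow _ _) ?_
      have : (X j + C (b j) : MvPolynomial (Fin N) ℚ).totalDegree ≤ 1 := by
        refine le_trans (totalDegree_add _ _) ?_
        simp [totalDegree_X, totalDegree_C]
      calc (u j) * (X j + C (b j) : MvPolynomial (Fin N) ℚ).totalDegree ≤ u j * 1 :=
            Nat.mul_le_mul_left _ this
        _ = u j := by ring
    have hdA0 : A₀.totalDegree ≤ u i := le_of_eq (totalDegree_X_pow _ _)
    -- case analysis
    by_cases hAz : A - A₀ = 0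
    · rcases ih with h0 | hlt
      · left; rw [key, hAz, h0]; ring
      · right
        rw [key, hAz, zero_mul, zero_add]
        calc (A₀ * (B - B₀)).totalDegree ≤ A₀.totalDegree + (B - B₀).totalDegree :=
              totalDegree_mul _ _
          _ < u i + ∑ j ∈ s', u j := by
              have := hlt
              omega
    · have hui : 1 ≤ u i := by
        by_contra hui
        have : u i = 0 := by omega
        apply hAz
        rw [hA, hA0, this, pow_zero, pow_zero, sub_self]
      have hdAA : (A - A₀).totalDegree < u i := pow_sub_deg i (b i) hui
      right
      rw [key]
      refine lt_of_le_of_lt (totalDegree_add _ _) ?_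
      rw [sup_lt_iff]
      constructor
      · calc ((A - A₀) * B).totalDegree ≤ (A - A₀).totalDegree + B.totalDegree :=
            totalDegree_mul _ _
          _ < u i + ∑ j ∈ s', u j := by omega
      · rcases ih with h0 | hlt
        · rw [h0, mul_zero]
          have : (0 : MvPolynomial (Fin N) ℚ).totalDegree = 0 := totalDegree_zero
          omega
        · calc (A₀ * (B - B₀)).totalDegree ≤ A₀.totalDegree + (B - B₀).totalDegree :=
              totalDegree_mul _ _
            _ < u i + ∑ j ∈ s', u j := by omega

end FDAux2

namespace FDAux2
open MvPolynomial Finset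

variable {N : ℕ}

lemma monomial_disc_deg (u : Fin N →₀ ℕ) (c : ℚ) (b : Fin N → ℚ) {D : ℕ}
    (hu : (u.sum fun _ e => e) ≤ D + 1) :
    ((MvPolynomial.bind₁ (fun i => X i + C (b i)) (monomial u c)) - monomial u c).totalDegree ≤ D := by
  rw [bind₁_monomial]
  have hm : (monomial u c : MvPolynomial (Fin N) ℚ) = C c * ∏ i ∈ u.support, (X i)^(u i) := by
    rw [monomial_eq]
    rfl
  rw [hm, ← mul_sub]
  rcases prod_sub_deg u.support u b with h0 | hlt
  · rw [h0, mul_zero]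
    simp
  · refine le_trans (totalDegree_mul _ _) ?_
    rw [totalDegree_C, zero_add]
    have hsum : (∑ i ∈ u.support, u i) = u.sum fun _ e => e := rfl
    omega

lemma eval_fdeg : ∀ (D : ℕ) (P : MvPolynomial (Fin N) ℚ), P.totalDegree ≤ D →
    ∀ l : List (Fin N → ℤ), l.length = D + 1 →
      multiDisc l (fun x : Fin N → ℤ => MvPolynomial.eval (fun i => (x i : ℚ)) P) = 0 := by
  intro D
  induction D with
  | zero =>
    intro P hP l hl
    have hC : P = C (P.coeff 0) := by
      ext u
      by_cases h : u = 0
      · subst h; simp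
      · rw [coeff_C, if_neg (fun hh => h hh.symm)]
        by_contra hne
        have hmem : u ∈ P.support := mem_support_iff.2 hne
        have h1 : (u.sum fun _ e => e) ≤ 0 := le_trans (le_totalDegree hmem) hP
        apply h
        ext i
        by_cases hi : i ∈ u.support
        · have hle : u i ≤ ∑ j ∈ u.support, u j :=
            Finset.single_le_sum (fun _ _ => Nat.zero_le _) hi
          have hs : (∑ j ∈ u.support, u j) = u.sum fun _ e => e := rfl
          simp only [Finsupp.coe_zero, Pi.zero_apply]
          omega
        · simpa using Finsupp.notMem_support_iff.1 hi
    rcases l with _ | ⟨a, _ | ⟨b, l⟩⟩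
    · simp at hl
    · funext x
      show disc a (fun x : Fin N → ℤ => MvPolynomial.eval (fun i => ((x i : ℚ))) P) x = 0
      rw [hC]
      simp [disc]
    · simp at hl
  | succ D ih =>
    intro P hP l hl
    have hne : l ≠ [] := by intro h; subst h; simp at hl
    have hsplit : l = l.dropLast ++ [l.getLast hne] := (List.dropLast_append_getLast hne).symm
    rw [hsplit, FDAux.multiDisc_append]
    set a := l.getLast hne with ha
    set g : Fin N → MvPolynomial (Fin N) ℚ := fun i => X i + C ((a i : ℚ)) with hgdef
    set P' := MvPolynomial.bind₁ g P - P with hP'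
    have hdisc : multiDisc [a] (fun x : Fin N → ℤ => MvPolynomial.eval (fun i => ((x i:ℚ))) P)
        = fun x : Fin N → ℤ => MvPolynomial.eval (fun i => ((x i:ℚ))) P' := by
      funext x
      show disc a _ x = _
      rw [disc]
      have hb : MvPolynomial.eval (fun i => ((x i : ℚ))) (MvPolynomial.bind₁ g P)
          = MvPolynomial.eval (fun i => (((x + a) i : ℚ))) P := by
        have hbind := eval₂Hom_bind₁ (RingHom.id ℚ) (fun i => ((x i : ℚ))) g P
        have hbind' : MvPolynomial.eval (fun i => ((x i : ℚ))) (MvPolynomial.bind₁ g P)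
            = MvPolynomial.eval
                (fun i => MvPolynomial.eval (fun j => ((x j : ℚ))) (g i)) P := hbind
        have hfun : (fun i => MvPolynomial.eval (fun j => ((x j : ℚ))) (g i))
            = fun i => (((x + a) i : ℚ)) := by
          funext i
          simp only [hgdef, map_add, MvPolynomial.eval_X, MvPolynomial.eval_C, Pi.add_apply]
          push_cast
          ring
        rw [hbind', hfun]
      rw [hP', map_sub, hb]
      rfl
    rw [hdisc]
    have hdeg : P'.totalDegree ≤ D := by
      have hsum : P' = ∑ u ∈ P.support,
          (MvPolynomial.bind₁ g (monomial u (P.coeff u)) - monomial u (P.coeff u)) := by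
        rw [hP']
        conv_lhs => rw [P.as_sum]
        rw [map_sum, Finset.sum_sub_distrib]
      rw [hsum]
      refine le_trans (totalDegree_finset_sum _ _) ?_
      apply Finset.sup_le
      intro u hu
      exact monomial_disc_deg u _ (fun i => ((a i : ℚ))) (le_trans (le_totalDegree hu) hP)
    exact ih P' hdeg l.dropLast (by rw [List.length_dropLast, hl]; omega)


end FDAux2

/-- **Finite functional degree = integer-valued polynomial.** A function `f : ℤ^N → ℤ`
has finite functional degree iff there is a polynomial `P ∈ ℚ[t_1, …, t_N]` with
`f x = P x` for every `x ∈ ℤ^N` (so `P` is integer-valued on `ℤ^N`). -/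
theorem finite_fdeg_iff_integer_valued_polynomial
    (N : ℕ) (hN : 1 ≤ N) (f : (Fin N → ℤ) → ℤ) :
    (∃ d : ℕ, FdegLE f d) ↔
      ∃ P : MvPolynomial (Fin N) ℚ,
        ∀ x : Fin N → ℤ, (f x : ℚ) = MvPolynomial.eval (fun i => (x i : ℚ)) P := by
  have hcast : (fun x : Fin N → ℤ => ((f x : ℚ))) = fun x => (Int.castAddHom ℚ) (f x) := rfl
  constructor
  · rintro ⟨d, hd⟩
    apply FDAux.hardQ N (fun x => ((f x : ℚ))) d
    intro l hl
    rw [hcast, FDAux.multiDisc_comp (Int.castAddHom ℚ) l f, hd l hl]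
    funext x
    simp
  · rintro ⟨P, hP⟩
    refine ⟨P.totalDegree, ?_⟩
    intro l hl
    have h2 := FDAux2.eval_fdeg P.totalDegree P le_rfl l hl
    have h3 : (fun x : Fin N → ℤ => MvPolynomial.eval (fun i => ((x i:ℚ))) P)
        = fun x => ((f x : ℚ)) := by
      funext x
      rw [hP]
    rw [h3, hcast, FDAux.multiDisc_comp (Int.castAddHom ℚ) l f] at h2
    funext x
    have h5 : ((multiDisc l f x : ℤ) : ℚ) = 0 := congrFun h2 x
    show multiDisc l f x = 0
    exact_mod_cast h5
end

section
/- Let p be a prime, let N, β ≥ 1 be integers, and let f : ℤ^N → ℤ be a function with fdeg(f) < (p − 1)(N − β + 1), i.e., fdeg(f) ≤ d for some integer d with d < (p − 1)(N − β + 1). Then Σ_{x ∈ {0, 1, …, p−1}^N} f(x) ≡ 0 (mod p^β). -/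
open Finset

namespace WilsonAux

variable {A B : Type*} [AddCommGroup A] [AddCommGroup B]

lemma disc_zero (a : A) : disc a (0 : A → B) = 0 := by
  funext x; simp [disc]

lemma multiDisc_zero : ∀ l : List A, multiDisc l (0 : A → B) = 0
  | [] => rfl
  | a :: l => by
    show disc a (multiDisc l (0 : A → B)) = 0
    rw [multiDisc_zero l, disc_zero]

lemma multiDisc_append (l₁ l₂ : List A) (f : A → B) :
    multiDisc (l₁ ++ l₂) f = multiDisc l₁ (multiDisc l₂ f) := by
  induction l₁ with
  | nil => rfl
  | cons a l ih =>
    show disc a (multiDisc (l ++ l₂) f) = disc a (multiDisc l (multiDisc l₂ f))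
    rw [ih]

lemma fdegLong {f : A → B} {d : ℕ} (hf : FdegLE f d) {l : List A}
    (hl : d + 1 ≤ l.length) : multiDisc l f = 0 := by
  have h := List.take_append_drop (l.length - (d + 1)) l
  have hd : (l.drop (l.length - (d + 1))).length = d + 1 := by
    rw [List.length_drop]; omega
  rw [← h, multiDisc_append, hf _ hd, multiDisc_zero]

lemma iterate_disc (a : A) (f : A → B) :
    ∀ k : ℕ, (disc a)^[k] f = multiDisc (List.replicate k a) f
  | 0 => rfl
  | k + 1 => by
    rw [Function.iterate_succ_apply', iterate_disc a f k, List.replicate_succ]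
    rfl

lemma cons_add_cons {N : ℕ} (a b : ℤ) (y w : Fin N → ℤ) :
    (Fin.cons a y : Fin (N + 1) → ℤ) + Fin.cons b w = Fin.cons (a + b) (y + w) := by
  funext i
  refine Fin.cases ?_ (fun j => ?_) i <;> simp

lemma multiDisc_slice {N : ℕ} (h : (Fin (N + 1) → ℤ) → ℤ) (c : ℤ) :
    ∀ l : List (Fin N → ℤ),
      multiDisc l (fun z => h (Fin.cons c z))
        = fun z => multiDisc (l.map (Fin.cons 0)) h (Fin.cons c z)
  | [] => rfl
  | a :: l => by
    show disc a (multiDisc l fun z => h (Fin.cons c z))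
        = fun z => disc (Fin.cons 0 a) (multiDisc (l.map (Fin.cons 0)) h) (Fin.cons c z)
    rw [multiDisc_slice h c l]
    funext z
    simp only [disc, cons_add_cons, add_zero]

lemma iter_disc_slice {N : ℕ} (h : (Fin (N + 1) → ℤ) → ℤ) (y : Fin N → ℤ) :
    ∀ k : ℕ, (disc (1 : ℤ))^[k] (fun t => h (Fin.cons t y))
      = fun t => ((disc (Fin.cons 1 0 : Fin (N + 1) → ℤ))^[k] h) (Fin.cons t y)
  | 0 => rfl
  | k + 1 => by
    rw [Function.iterate_succ_apply', Function.iterate_succ_apply', iter_disc_slice h y k]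
    funext t
    simp only [disc, cons_add_cons, add_zero]

lemma hockey (p k : ℕ) (hk : k < p) :
    ∑ t ∈ range p, t.choose k = p.choose (k + 1) := by
  have h : ∑ m ∈ Icc k (p - 1), m.choose k = p.choose (k + 1) := by
    have h2 := Nat.sum_Icc_choose (p - 1) k
    rwa [Nat.sub_add_cancel (by omega)] at h2
  rw [← h]
  refine (Finset.sum_subset ?_ ?_).symm
  · intro x hx; simp only [mem_Icc] at hx; simp only [mem_range]; omega
  · intro x hx hx2
    simp only [mem_range] at hx
    simp only [mem_Icc] at hx2
    exact Nat.choose_eq_zero_of_lt (by omega)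

lemma sum_u (p : ℕ) (u : ℤ → ℤ) :
    ∑ t ∈ range p, u (t : ℤ)
      = ∑ k ∈ range p, (p.choose (k + 1) : ℤ) * (disc (1 : ℤ))^[k] u 0 := by
  have h1 : ∀ t ∈ range p,
      u (t : ℤ) = ∑ k ∈ range p, (t.choose k : ℤ) * (disc (1 : ℤ))^[k] u 0 := by
    intro t ht
    simp only [mem_range] at ht
    have h := shift_eq_sum_fwdDiff_iter (1 : ℤ) u t 0
    rw [zero_add, nsmul_eq_mul, mul_one] at h
    have hsub : range (t + 1) ⊆ range p := by
      intro x hx; simp only [mem_range] at *; omega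
    rw [h, Finset.sum_subset hsub ?_]
    · exact Finset.sum_congr rfl fun k _ => by rw [nsmul_eq_mul]; rfl
    · intro k _ hk2
      simp only [mem_range, not_lt] at hk2
      rw [Nat.choose_eq_zero_of_lt (by omega), zero_smul]
  rw [Finset.sum_congr rfl h1, Finset.sum_comm]
  refine Finset.sum_congr rfl fun k hk => ?_
  simp only [mem_range] at hk
  rw [← Finset.sum_mul, ← hockey p k hk]
  push_cast
  ring

end WilsonAux

namespace WilsonAux

lemma coe_cons {N p : ℕ} (t : Fin p) (y : Fin N → Fin p) :
    (fun i => ((Fin.cons t y : Fin (N + 1) → Fin p) i : ℤ))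
      = Fin.cons (t : ℤ) (fun i => (y i : ℤ)) := by
  funext i
  refine Fin.cases ?_ (fun j => ?_) i <;> simp

lemma fdeg_g {N d k : ℕ} {f : (Fin (N + 1) → ℤ) → ℤ} (hf : FdegLE f d) :
    FdegLE (fun z : Fin N → ℤ =>
      (disc (Fin.cons 1 0 : Fin (N + 1) → ℤ))^[k] f (Fin.cons 0 z)) (d - k) := by
  intro l hl
  have h1 : (fun z : Fin N → ℤ =>
        (disc (Fin.cons 1 0 : Fin (N + 1) → ℤ))^[k] f (Fin.cons 0 z))
      = fun z => multiDisc (List.replicate k (Fin.cons 1 0)) f (Fin.cons 0 z) := by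
    rw [iterate_disc]
  rw [h1, multiDisc_slice]
  funext z
  rw [← multiDisc_append]
  exact congrFun
    (fdegLong hf (l := l.map (Fin.cons 0) ++ List.replicate k (Fin.cons 1 0))
      (by simp only [List.length_append, List.length_map, List.length_replicate, hl]; omega)) _

lemma key (p : ℕ) (hp : p.Prime) :
    ∀ N β d : ℕ, ∀ f : (Fin N → ℤ) → ℤ, FdegLE f d →
      (d : ℤ) < ((p : ℤ) - 1) * ((N : ℤ) - (β : ℤ) + 1) →
      (p : ℤ) ^ β ∣ ∑ x : Fin N → Fin p, f (fun i => (x i : ℤ)) := by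
  have hp2 : (2 : ℤ) ≤ (p : ℤ) := by exact_mod_cast hp.two_le
  intro N
  induction N with
  | zero =>
    intro β d f hf hlt
    cases β with
    | zero => simpa using one_dvd _
    | succ β =>
      exfalso
      have hd : (0 : ℤ) ≤ (d : ℤ) := Int.natCast_nonneg d
      have hb : (0 : ℤ) ≤ (β : ℤ) := Int.natCast_nonneg β
      push_cast at hlt
      nlinarith
  | succ N ih =>
    intro β d f hf hlt
    cases β with
    | zero => simpa using one_dvd _
    | succ β' =>
      -- decompose the sum
      have hsum : ∑ x : Fin (N + 1) → Fin p, f (fun i => (x i : ℤ))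
          = ∑ k ∈ range p, (p.choose (k + 1) : ℤ) *
              ∑ y : Fin N → Fin p,
                (disc (Fin.cons 1 0 : Fin (N + 1) → ℤ))^[k] f
                  (Fin.cons 0 (fun i => (y i : ℤ))) := by
        rw [← Equiv.sum_comp (Fin.consEquiv fun _ => Fin p)
          (fun x : Fin (N + 1) → Fin p => f (fun i => (x i : ℤ))), Fintype.sum_prod_type]
        have step1 : ∀ t : Fin p, ∀ y : Fin N → Fin p,
            f (fun i => (((Fin.consEquiv fun _ => Fin p) (t, y)) i : ℤ))
              = f (Fin.cons (t : ℤ) (fun i => (y i : ℤ))) := by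
          intro t y
          rw [show ((Fin.consEquiv fun _ => Fin p) (t, y)) = Fin.cons t y from rfl, coe_cons]
        calc ∑ t : Fin p, ∑ y : Fin N → Fin p,
              f (fun i => (((Fin.consEquiv fun _ => Fin p) (t, y)) i : ℤ))
            = ∑ y : Fin N → Fin p, ∑ t : Fin p,
              f (Fin.cons (t : ℤ) (fun i => (y i : ℤ))) := by
              rw [Finset.sum_comm]
              exact Finset.sum_congr rfl fun y _ =>
                Finset.sum_congr rfl fun t _ => step1 t y
          _ = ∑ y : Fin N → Fin p, ∑ k ∈ range p, (p.choose (k + 1) : ℤ) *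
                (disc (Fin.cons 1 0 : Fin (N + 1) → ℤ))^[k] f
                  (Fin.cons 0 (fun i => (y i : ℤ))) := by
              refine Finset.sum_congr rfl fun y _ => ?_
              have h2 := sum_u p (fun s : ℤ => f (Fin.cons s (fun i => (y i : ℤ))))
              rw [Fin.sum_univ_eq_sum_range
                (fun t : ℕ => f (Fin.cons (t : ℤ) (fun i => (y i : ℤ)))), h2]
              refine Finset.sum_congr rfl fun k _ => ?_
              rw [iter_disc_slice]
          _ = _ := by
              rw [Finset.sum_comm]
              exact Finset.sum_congr rfl fun k _ => (Finset.mul_sum _ _ _).symm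
      rw [hsum]; clear hsum
      refine Finset.dvd_sum fun k hk => ?_
      simp only [mem_range] at hk
      by_cases hkp : k + 1 < p
      · -- p divides the binomial coefficient, p^β' divides the inner sum
        have h1 : (p : ℤ) ∣ (p.choose (k + 1) : ℤ) :=
          Int.natCast_dvd_natCast.mpr (Nat.Prime.dvd_choose_self hp (by omega) hkp)
        have h2 : (p : ℤ) ^ β' ∣ ∑ y : Fin N → Fin p,
            (disc (Fin.cons 1 0 : Fin (N + 1) → ℤ))^[k] f
              (Fin.cons 0 (fun i => (y i : ℤ))) := by
          refine ih β' (d - k)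
            (fun z => (disc (Fin.cons 1 0 : Fin (N + 1) → ℤ))^[k] f (Fin.cons 0 z))
            (fdeg_g hf) ?_
          have hle : ((d - k : ℕ) : ℤ) ≤ (d : ℤ) := by omega
          have heq : ((N : ℤ) - (β' : ℤ) + 1)
              = (((N + 1 : ℕ)) : ℤ) - ((β' + 1 : ℕ) : ℤ) + 1 := by push_cast; ring
          rw [heq]
          exact lt_of_le_of_lt hle hlt
        rw [pow_succ, mul_comm ((p : ℤ) ^ β') _]
        exact mul_dvd_mul h1 h2
      · -- k = p - 1
        have hkp1 : k + 1 = p := by omega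
        by_cases hdk : d + 1 ≤ k
        · -- the iterated difference vanishes entirely
          have h0 : (disc (Fin.cons 1 0 : Fin (N + 1) → ℤ))^[k] f = 0 := by
            rw [iterate_disc]
            exact fdegLong hf (by simp only [List.length_replicate]; omega)
          rw [Finset.sum_congr rfl fun y _ => congrFun h0 (Fin.cons 0 (fun i => ((y i : ℕ) : ℤ)))]
          simp
        · -- use IH with the same β
          have hkd : k ≤ d := by omega
          have h2 : (p : ℤ) ^ (β' + 1) ∣ ∑ y : Fin N → Fin p,
              (disc (Fin.cons 1 0 : Fin (N + 1) → ℤ))^[k] f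
                (Fin.cons 0 (fun i => (y i : ℤ))) := by
            refine ih (β' + 1) (d - k)
              (fun z => (disc (Fin.cons 1 0 : Fin (N + 1) → ℤ))^[k] f (Fin.cons 0 z))
              (fdeg_g hf) ?_
            have hcast : ((d - k : ℕ) : ℤ) = (d : ℤ) - (k : ℤ) := by omega
            have hkz : (k : ℤ) = (p : ℤ) - 1 := by omega
            rw [hcast, hkz]
            push_cast at hlt ⊢
            nlinarith
          exact Dvd.dvd.mul_left h2 _

end WilsonAux

/-- **Wilson's Lemma (Lemma 3.1).** Let `p` be prime, `N, β ≥ 1`, and let `f : ℤ^N → ℤ`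
satisfy `fdeg f < (p - 1)(N - β + 1)` (i.e. `f = 0`, or `fdeg f ≤ d` for some `d ∈ ℕ`
with `d < (p - 1)(N - β + 1)`). Then `∑_{x ∈ {0, …, p-1}^N} f(x) ≡ 0 (mod p^β)`. -/
theorem wilson_lemma
    (p : ℕ) (hp : p.Prime) (N β : ℕ) (hN : 1 ≤ N) (hβ : 1 ≤ β)
    (f : (Fin N → ℤ) → ℤ)
    (hdeg : f = 0 ∨ ∃ d : ℕ, FdegLE f d ∧
      (d : ℤ) < ((p : ℤ) - 1) * ((N : ℤ) - (β : ℤ) + 1)) :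
    (p : ℤ) ^ β ∣ ∑ x : Fin N → Fin p, f (fun i => (x i : ℤ)) := by
  rcases hdeg with h0 | ⟨d, hf, hlt⟩
  · subst h0; simp
  · exact WilsonAux.key p hp N β d f hf hlt
end

section
/- Let p be a prime and let R be an infinite commutative domain of characteristic p. Let n ≥ 1 and let f ∈ R[t_1, …, t_n] be a nonzero polynomial, with associated evaluation function E(f) : R^n → R, x ↦ f(x). Then fdeg(E(f)) = σ_p(f): that is, with d := σ_p(f), every (d+1)-fold iterated difference of E(f) vanishes, but if d ≥ 1 there exist a_1, …, a_d ∈ R^n with Δ_{a_1}⋯Δ_{a_d} E(f) ≠ 0 (and if d = 0 then E(f) ≠ 0). -/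
/-- The `p`-weight degree `σ_p(f)` of a multivariate polynomial: the maximum over the
monomials `t_1^{d_1} ⋯ t_n^{d_n}` occurring in `f` (with nonzero coefficient) of
`σ_p(d_1) + ⋯ + σ_p(d_n)`, where `σ_p(d)` is the sum of the base-`p` digits of `d`. -/
def pWeightDeg (p : ℕ) {R : Type*} [CommSemiring R] {n : ℕ}
    (f : MvPolynomial (Fin n) R) : ℕ :=
  f.support.sup fun m => ∑ i, (Nat.digits p (m i)).sum

def sdig (p n : ℕ) : ℕ := (Nat.digits p n).sum

lemma sdig_zero (p : ℕ) : sdig p 0 = 0 := by simp [sdig]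

lemma sdig_def {p : ℕ} (hp : 1 < p) {n : ℕ} (hn : n ≠ 0) :
    sdig p n = n % p + sdig p (n / p) := by
  unfold sdig
  rw [Nat.digits_def' hp (Nat.pos_of_ne_zero hn)]
  simp

lemma sdig_one {p : ℕ} (hp : 1 < p) : sdig p 1 = 1 := by
  rw [sdig_def hp one_ne_zero, Nat.mod_eq_of_lt hp, Nat.div_eq_of_lt hp, sdig_zero]

lemma sdig_mul_p {p : ℕ} (hp : 1 < p) (m : ℕ) : sdig p (p * m) = sdig p m := by
  rcases Nat.eq_zero_or_pos m with rfl | hm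
  · simp [sdig_zero]
  · rw [sdig_def hp (by positivity), Nat.mul_mod_right, Nat.mul_div_cancel_left _ (by omega)]
    simp

lemma sdig_pow_mul {p : ℕ} (hp : 1 < p) (j m : ℕ) : sdig p (p ^ j * m) = sdig p m := by
  induction j with
  | zero => simp
  | succ j ih => rw [pow_succ, mul_comm (p^j) p, mul_assoc, sdig_mul_p hp, ih]

lemma sdig_sub_one {p : ℕ} (hp : 1 < p) {m : ℕ} (hm : ¬ p ∣ m) :
    sdig p (m - 1) + 1 = sdig p m := by
  have hm0 : m ≠ 0 := by rintro rfl; exact hm (dvd_zero p)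
  have hr : m % p ≠ 0 := fun h => hm (Nat.dvd_of_mod_eq_zero h)
  have hrp : m % p < p := Nat.mod_lt m (by omega)
  have hmd := Nat.mod_add_div m p
  have hm1 : m - 1 = (m % p - 1) + p * (m / p) := by omega
  rcases Nat.eq_zero_or_pos (m - 1) with h0 | hpos
  · have h1 : m = 1 := by omega
    subst h1
    simp [sdig_zero, sdig_one hp]
  · rw [sdig_def hp (by omega), sdig_def hp hm0]
    have h1 : (m - 1) % p = m % p - 1 := by
      rw [hm1, Nat.add_mul_mod_self_left, Nat.mod_eq_of_lt (by omega)]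
    have h2 : (m - 1) / p = m / p := by
      rw [hm1, Nat.add_mul_div_left _ _ (by omega : 0 < p), Nat.div_eq_of_lt (by omega)]
      omega
    rw [h1, h2]
    omega

lemma sdig_ne_zero {p : ℕ} (hp : 1 < p) {n : ℕ} (hn : n ≠ 0) : sdig p n ≠ 0 := by
  induction n using Nat.strong_induction_on with
  | _ n ih =>
    rw [sdig_def hp hn]
    rcases Nat.eq_zero_or_pos (n % p) with h | h
    · have hd : p ∣ n := Nat.dvd_of_mod_eq_zero h
      have hq : n / p ≠ 0 := by
        rcases hd with ⟨c, rfl⟩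
        rw [Nat.mul_div_cancel_left _ (by omega)]
        rintro rfl; simp at hn
      have := ih (n / p) (Nat.div_lt_self (Nat.pos_of_ne_zero hn) hp) hq
      omega
    · omega

lemma sdig_add_le {p : ℕ} (hp : 1 < p) (a b : ℕ) : sdig p (a + b) ≤ sdig p a + sdig p b := by
  have H : ∀ N a b : ℕ, a + b ≤ N → sdig p (a + b) ≤ sdig p a + sdig p b := by
    intro N
    induction N with
    | zero =>
      intro a b h
      have : a = 0 ∧ b = 0 := by omega
      simp [this.1, this.2, sdig_zero]
    | succ N ih =>
      intro a b hN
      rcases Nat.eq_zero_or_pos a with rfl | ha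
      · simp
      rcases Nat.eq_zero_or_pos b with rfl | hb
      · simp
      rw [sdig_def hp (by omega : a + b ≠ 0), sdig_def hp (by omega : a ≠ 0),
        sdig_def hp (by omega : b ≠ 0)]
      have hba : a / p + b / p ≤ N := by
        have h1 := Nat.div_lt_self ha hp
        have h2 := Nat.div_le_self b p
        omega
      have e1 := Nat.mod_add_div a p
      have e2 := Nat.mod_add_div b p
      have hma : a % p < p := Nat.mod_lt _ (by omega)
      have hmb : b % p < p := Nat.mod_lt _ (by omega)
      have heq : a + b = (a % p + b % p) + p * (a / p + b / p) := by
        rw [Nat.mul_add]; omega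
      have hmod : (a + b) % p = (a % p + b % p) % p := by
        rw [heq, Nat.add_mul_mod_self_left]
      have hdiv : (a + b) / p = (a % p + b % p) / p + (a / p + b / p) := by
        rw [heq, Nat.add_mul_div_left _ _ (by omega : 0 < p)]
      rcases lt_or_ge (a % p + b % p) p with hc | hc
      · rw [hmod, hdiv, Nat.mod_eq_of_lt hc, Nat.div_eq_of_lt hc, zero_add]
        have := ih (a / p) (b / p) hba
        omega
      · have hsm : (a % p + b % p) % p = a % p + b % p - p := by
          rw [Nat.mod_eq_sub_mod hc, Nat.mod_eq_of_lt (by omega)]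
        have hsd : (a % p + b % p) / p = 1 := by
          apply Nat.div_eq_of_lt_le <;> omega
        rw [hmod, hdiv, hsm, hsd]
        have i1 := ih (a / p) (b / p) hba
        have i2 : sdig p (1 + (a / p + b / p)) ≤ sdig p 1 + sdig p (a / p + b / p) := by
          apply ih
          have h1a := Nat.div_lt_self ha hp
          have h1b := Nat.div_lt_self hb hp
          omega
        rw [sdig_one hp] at i2
        omega
  exact H (a + b) a b le_rfl

lemma choose_pow_mul_not_dvd {p : ℕ} (hp : p.Prime) (j M : ℕ) (hM : ¬ p ∣ M) :
    ¬ p ∣ Nat.choose (p ^ j * M) (p ^ j) := by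
  haveI : Fact p.Prime := ⟨hp⟩
  have hp1 : 1 < p := hp.one_lt
  induction j with
  | zero => simpa [Nat.choose_one_right] using hM
  | succ j ih =>
    intro hdvd
    apply ih
    have hmod := @Choose.choose_modEq_choose_mod_mul_choose_div_nat (p ^ (j+1) * M) (p ^ (j+1)) p _
    have e0 : p ^ (j+1) * M = p * (p ^ j * M) := by ring
    have e0' : p ^ (j+1) = p * p ^ j := by ring
    have h1 : (p ^ (j+1) * M) % p = 0 := by rw [e0, Nat.mul_mod_right]
    have h2 : (p ^ (j+1)) % p = 0 := by rw [e0', Nat.mul_mod_right]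
    have h3 : (p ^ (j+1) * M) / p = p ^ j * M := by rw [e0, Nat.mul_div_cancel_left _ (by omega)]
    have h4 : (p ^ (j+1)) / p = p ^ j := by rw [e0', Nat.mul_div_cancel_left _ (by omega)]
    rw [h1, h2, h3, h4, Nat.choose_self, one_mul] at hmod
    have : (0 : ℕ) ≡ Nat.choose (p ^ j * M) (p ^ j) [MOD p] :=
      ((Nat.modEq_zero_iff_dvd).2 hdvd).symm.trans hmod
    exact (Nat.modEq_zero_iff_dvd).1 this.symm

lemma exists_pow_factor {p : ℕ} (hp : p.Prime) {N : ℕ} (hN : N ≠ 0) :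
    ∃ j M, N = p ^ j * M ∧ ¬ p ∣ M ∧ M ≠ 0 ∧
      sdig p (N - p ^ j) + 1 = sdig p N ∧ p ^ j ≤ N := by
  refine ⟨N.factorization p, N / p ^ N.factorization p,
    (Nat.ordProj_mul_ordCompl_eq_self N p).symm, Nat.not_dvd_ordCompl hp hN, ?_, ?_, ?_⟩
  · intro h
    apply hN
    have h2 := Nat.ordProj_mul_ordCompl_eq_self N p
    rw [h, mul_zero] at h2
    exact h2.symm
  · set j := N.factorization p
    set M := N / p ^ j with hM
    have hNe : N = p ^ j * M := (Nat.ordProj_mul_ordCompl_eq_self N p).symm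
    have hMd : ¬ p ∣ M := Nat.not_dvd_ordCompl hp hN
    have hM0 : M ≠ 0 := by
      intro h; rw [h, mul_zero] at hNe; exact hN hNe
    have h1 : N - p ^ j = p ^ j * (M - 1) := by rw [hNe, Nat.mul_sub_one]
    rw [h1, hNe, sdig_pow_mul hp.one_lt, sdig_pow_mul hp.one_lt]
    exact sdig_sub_one hp.one_lt hMd
  · set j := N.factorization p
    have hNe : N = p ^ j * (N / p ^ j) := (Nat.ordProj_mul_ordCompl_eq_self N p).symm
    have hM0 : N / p ^ j ≠ 0 := by
      intro h; rw [h, mul_zero] at hNe; exact hN hNe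
    calc p ^ j = p ^ j * 1 := (mul_one _).symm
    _ ≤ p ^ j * (N / p ^ j) := Nat.mul_le_mul_left _ (Nat.one_le_iff_ne_zero.mpr hM0)
    _ = N := hNe.symm

open MvPolynomial

/-- weight of an exponent vector -/
def wtv (p : ℕ) {n : ℕ} (m : Fin n →₀ ℕ) : ℕ := ∑ i, sdig p (m i)

lemma wtv_add_le {p : ℕ} (hp : 1 < p) {n : ℕ} (a b : Fin n →₀ ℕ) :
    wtv p (a + b) ≤ wtv p a + wtv p b := by
  unfold wtv
  rw [← Finset.sum_add_distrib]
  apply Finset.sum_le_sum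
  intro i _
  exact sdig_add_le hp (a i) (b i)

lemma wtv_zero (p : ℕ) {n : ℕ} : wtv p (0 : Fin n →₀ ℕ) = 0 := by
  simp [wtv, sdig_zero]

lemma wtv_single {p : ℕ} {n : ℕ} (i : Fin n) (q : ℕ) :
    wtv p (Finsupp.single i q) = sdig p q := by
  unfold wtv
  rw [Finset.sum_eq_single i]
  · simp
  · intro k _ hk
    rw [Finsupp.single_apply, if_neg (Ne.symm hk), sdig_zero]
  · simp

lemma wtv_eq_zero {p : ℕ} (hp : 1 < p) {n : ℕ} {m : Fin n →₀ ℕ} (h : wtv p m = 0) : m = 0 := by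
  ext i
  have h2 : sdig p (m i) = 0 := by
    have := (Finset.sum_eq_zero_iff).1 h i (Finset.mem_univ i)
    exact this
  by_contra hne
  exact sdig_ne_zero hp hne h2

/-- decomposition of a nonzero exponent vector -/
lemma wtv_decomp {p : ℕ} (hp : p.Prime) {n : ℕ} {m : Fin n →₀ ℕ} (hm : m ≠ 0) :
    ∃ (i : Fin n) (j : ℕ) (m₂ : Fin n →₀ ℕ),
      m = m₂ + Finsupp.single i (p ^ j) ∧ wtv p m = wtv p m₂ + 1 ∧
      ¬ p ∣ Nat.choose (m i) (m₂ i) := by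
  obtain ⟨i, hi⟩ : ∃ i, m i ≠ 0 := by
    by_contra h
    push_neg at h
    exact hm (Finsupp.ext h)
  obtain ⟨j, M, hNe, hMd, hM0, hsd, hle⟩ := exists_pow_factor hp hi
  refine ⟨i, j, m.erase i + Finsupp.single i (m i - p ^ j), ?_, ?_, ?_⟩
  · ext k
    by_cases hk : k = i
    · subst hk
      simp [Finsupp.erase_same]
      omega
    · rw [Finsupp.add_apply, Finsupp.add_apply, Finsupp.erase_ne hk,
        Finsupp.single_apply, Finsupp.single_apply,
        if_neg (fun h => hk h.symm), if_neg (fun h => hk h.symm), add_zero, add_zero]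
  · have key : ∀ (v : ℕ), wtv p (m.erase i + Finsupp.single i v) = (∑ k ∈ Finset.univ.erase i, sdig p (m k)) + sdig p v := by
      intro v
      unfold wtv
      rw [← Finset.add_sum_erase _ _ (Finset.mem_univ i)]
      rw [add_comm]
      congr 1
      · apply Finset.sum_congr rfl
        intro k hk
        have hki : k ≠ i := (Finset.mem_erase.1 hk).1
        rw [Finsupp.add_apply, Finsupp.erase_ne hki, Finsupp.single_apply, if_neg (fun h => hki h.symm), add_zero]
      · rw [Finsupp.add_apply, Finsupp.erase_same, Finsupp.single_apply, if_pos rfl, zero_add]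
    have h1 : wtv p m = (∑ k ∈ Finset.univ.erase i, sdig p (m k)) + sdig p (m i) := by
      unfold wtv
      rw [← Finset.add_sum_erase _ _ (Finset.mem_univ i), add_comm]
    rw [h1, key]
    omega
  · have hval : (m.erase i + Finsupp.single i (m i - p ^ j)) i = m i - p ^ j := by
      rw [Finsupp.add_apply, Finsupp.erase_same, Finsupp.single_apply, if_pos rfl, zero_add]
    rw [hval, Nat.choose_symm hle, hNe]
    exact choose_pow_mul_not_dvd hp j M hMd

section Poly

variable {R : Type*} [CommRing R] {n : ℕ}

/-- the shift substitution -/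
noncomputable def Tm (a : Fin n → R) : MvPolynomial (Fin n) R →ₐ[R] MvPolynomial (Fin n) R :=
  MvPolynomial.aeval (fun k => X k + C (a k))

lemma eval_Tm (a : Fin n → R) (f : MvPolynomial (Fin n) R) (x : Fin n → R) :
    eval x (Tm a f) = eval (x + a) f := by
  unfold Tm
  induction f using MvPolynomial.induction_on with
  | C c => simp
  | add f g hf hg => rw [map_add, map_add, hf, hg, ← map_add]
  | mul_X f i hf =>
    rw [map_mul, MvPolynomial.aeval_X, map_mul, map_add, MvPolynomial.eval_X,
      MvPolynomial.eval_C, hf, map_mul, MvPolynomial.eval_X, Pi.add_apply]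

lemma disc_eval (a : Fin n → R) (f : MvPolynomial (Fin n) R) :
    disc a (fun x => eval x f) = fun x => eval x (Tm a f - f) := by
  funext x
  simp [disc, eval_Tm]

/-- support of sum -/
lemma mv_support_sum {ι : Type*} (s : Finset ι) (g : ι → MvPolynomial (Fin n) R) :
    (∑ i ∈ s, g i).support ⊆ s.biUnion fun i => (g i).support := by
  classical
  induction s using Finset.induction_on with
  | empty => simp
  | insert x s hx ih =>
    rw [Finset.sum_insert hx, Finset.biUnion_insert]
    exact (MvPolynomial.support_add).trans (Finset.union_subset_union (le_refl _) ih)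

variable {p : ℕ}

lemma mem_support_C_eq_zero {x : R} {v : Fin n →₀ ℕ}
    (h : v ∈ (MvPolynomial.C (σ := Fin n) x).support) : v = 0 := by
  classical
  rw [show (MvPolynomial.C (σ := Fin n) x) = monomial 0 x from rfl,
    MvPolynomial.support_monomial] at h
  split at h
  · simp at h
  · simpa using h

lemma mem_support_monomial_eq {x : R} {m v : Fin n →₀ ℕ}
    (h : v ∈ ((monomial m) x : MvPolynomial (Fin n) R).support) : v = m := by
  classical
  rw [MvPolynomial.support_monomial] at h
  split at h
  · simp at h
  · simpa using h

lemma Tm_X_pow_pow (hp : p.Prime) [CharP R p] (a : Fin n → R) (i : Fin n) (j : ℕ) :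
    Tm a ((X i : MvPolynomial (Fin n) R) ^ p ^ j) = X i ^ p ^ j + C (a i ^ p ^ j) := by
  haveI : Fact p.Prime := ⟨hp⟩
  unfold Tm
  rw [map_pow, MvPolynomial.aeval_X, add_pow_char_pow, ← C_pow]

/-- key weight-drop lemma for monomials -/
lemma D_monomial_wlt (hp : p.Prime) [CharP R p] [Nontrivial R] :
    ∀ (w : ℕ) (m : Fin n →₀ ℕ), wtv p m ≤ w → ∀ (c : R) (a : Fin n → R),
    ∀ m' ∈ (Tm a (monomial m c) - monomial m c).support, wtv p m' < wtv p m := by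
  intro w
  induction w with
  | zero =>
    intro m hm c a m' hm'
    have h0 : m = 0 := wtv_eq_zero hp.one_lt (by omega)
    subst h0
    rw [show ((monomial (0 : Fin n →₀ ℕ)) c) = C c from rfl] at hm'
    unfold Tm at hm'
    rw [MvPolynomial.aeval_C, MvPolynomial.algebraMap_eq, sub_self] at hm'
    simp at hm'
  | succ w ih =>
    intro m hm c a m' hm'
    rcases Nat.eq_zero_or_pos (wtv p m) with h0 | hpos
    · exact absurd hm' (by
        have h0' : m = 0 := wtv_eq_zero hp.one_lt h0
        subst h0'
        rw [show ((monomial (0 : Fin n →₀ ℕ)) c) = C c from rfl]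
        unfold Tm
        rw [MvPolynomial.aeval_C, MvPolynomial.algebraMap_eq, sub_self]
        simp)
    have hm0 : m ≠ 0 := fun h => by simp [h, wtv_zero] at hpos
    obtain ⟨i, j, m₂, hdec, hwt⟩ := wtv_decomp hp hm0
    have hm₂w : wtv p m₂ ≤ w := by omega
    -- monomial m c = monomial m₂ c * X i ^ p ^ j
    have hmono : (monomial m c : MvPolynomial (Fin n) R) =
        monomial m₂ c * X i ^ p ^ j := by
      rw [X_pow_eq_monomial, monomial_mul, mul_one, ← hdec]
    set A := (monomial m₂ c : MvPolynomial (Fin n) R)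
    set B := (X i : MvPolynomial (Fin n) R) ^ p ^ j
    have hsplit : Tm a (A * B) - A * B =
        (Tm a A - A) * Tm a B + A * (Tm a B - B) := by
      rw [map_mul]; ring
    rw [hmono, hsplit] at hm'
    have hTB : Tm a B = X i ^ p ^ j + C (a i ^ p ^ j) := Tm_X_pow_pow hp a i j
    have hm'' := MvPolynomial.support_add hm'
    rw [Finset.mem_union] at hm''
    rcases hm'' with h1 | h2
    · -- m' ∈ support ((Tm a A - A) * Tm a B)
      have := MvPolynomial.support_mul _ _ h1
      rw [Finset.mem_add] at this
      obtain ⟨u, hu, v, hv, huv⟩ := this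
      have hwu : wtv p u < wtv p m₂ := ih m₂ hm₂w c a u hu
      have hwv : wtv p v ≤ 1 := by
        rw [hTB] at hv
        have := MvPolynomial.support_add hv
        rw [Finset.mem_union] at this
        rcases this with hv1 | hv2
        · have := MvPolynomial.support_X_pow (R := R) i (p ^ j) ▸ hv1
          rw [Finset.mem_singleton] at this
          subst this
          rw [wtv_single, ← Nat.mul_one (p ^ j), sdig_pow_mul hp.one_lt, sdig_one hp.one_lt]
        · have := mem_support_C_eq_zero hv2
          subst this
          rw [wtv_zero]
          omega
      have h3 : wtv p (u + v) ≤ wtv p u + wtv p v := wtv_add_le hp.one_lt u v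
      rw [huv] at h3
      omega
    · -- m' ∈ support (A * C (a i ^ p ^ j))
      rw [hTB] at h2
      have hBB : (X i : MvPolynomial (Fin n) R) ^ p ^ j + C (a i ^ p ^ j) - B = C (a i ^ p ^ j) := by
        unfold B; ring
      rw [hBB] at h2
      have := MvPolynomial.support_mul _ _ h2
      rw [Finset.mem_add] at this
      obtain ⟨u, hu, v, hv, huv⟩ := this
      have hu' : u = m₂ := mem_support_monomial_eq hu
      have hv' : v = 0 := mem_support_C_eq_zero hv
      have h4 : wtv p m' = wtv p m₂ := by rw [← huv, hu', hv', add_zero]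
      omega

lemma D_wlt (hp : p.Prime) [CharP R p] [Nontrivial R] {d : ℕ} {f : MvPolynomial (Fin n) R}
    (hf : ∀ m ∈ f.support, wtv p m ≤ d) (a : Fin n → R) :
    ∀ m' ∈ (Tm a f - f).support, wtv p m' < d := by
  classical
  intro m' hm'
  have hrw : Tm a f - f = ∑ m ∈ f.support,
      (Tm a (monomial m (coeff m f)) - monomial m (coeff m f)) := by
    rw [Finset.sum_sub_distrib, ← map_sum, support_sum_monomial_coeff]
  rw [hrw] at hm'
  have := mv_support_sum _ _ hm'
  rw [Finset.mem_biUnion] at this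
  obtain ⟨m, hmf, hm'2⟩ := this
  have h1 := D_monomial_wlt hp (wtv p m) m le_rfl (coeff m f) a m' hm'2
  have h2 := hf m hmf
  omega

lemma multiDisc_concat {A B : Type*} [AddCommGroup A] [AddCommGroup B] (l : List A) (a : A)
    (f : A → B) : multiDisc (l ++ [a]) f = multiDisc l (disc a f) := by
  induction l with
  | nil => rfl
  | cons x l ih =>
    show disc x (multiDisc (l ++ [a]) f) = disc x (multiDisc l (disc a f))
    rw [ih]

lemma fdegle_of_wle (hp : p.Prime) [CharP R p] [IsDomain R] :
    ∀ (d : ℕ) (f : MvPolynomial (Fin n) R), (∀ m ∈ f.support, wtv p m ≤ d) →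
    ∀ l : List (Fin n → R), l.length = d + 1 →
      multiDisc l (fun x => eval x f) = 0 := by
  intro d
  induction d with
  | zero =>
    intro f hf l hl
    match l, hl with
    | [a], _ =>
      show disc a (fun x => eval x f) = 0
      rw [disc_eval]
      have hD : Tm a f - f = 0 := by
        rw [← MvPolynomial.support_eq_empty]
        by_contra hne
        obtain ⟨m', hm'⟩ := Finset.nonempty_iff_ne_empty.2 hne
        exact absurd (D_wlt hp hf a m' hm') (by omega)
      rw [hD]
      funext x
      simp
  | succ d ih =>
    intro f hf l hl
    rcases l.eq_nil_or_concat with rfl | ⟨L, b, rfl⟩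
    · simp at hl
    · rw [List.concat_eq_append, multiDisc_concat, disc_eval]
      apply ih
      · intro m hm
        have := D_wlt hp hf b m hm
        omega
      · simpa using hl

lemma single_add_erase_eq_iff {i : Fin n} {e : ℕ} {d m' : Fin n →₀ ℕ} :
    Finsupp.single i e + Finsupp.erase i d = m' ↔
      (e = m' i ∧ Finsupp.erase i d = Finsupp.erase i m') := by
  constructor
  · intro h
    constructor
    · rw [← h, Finsupp.add_apply, Finsupp.single_apply, if_pos rfl, Finsupp.erase_same, add_zero]
    · rw [← h, Finsupp.erase_add, Finsupp.erase_single, zero_add,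
        Finsupp.erase_idem]
  · rintro ⟨he, herase⟩
    ext k
    by_cases hk : k = i
    · subst hk
      rw [Finsupp.add_apply, Finsupp.single_apply, if_pos rfl, Finsupp.erase_same, add_zero, he]
    · rw [Finsupp.add_apply, Finsupp.single_apply, if_neg (fun h => hk h.symm), zero_add]
      have := DFunLike.congr_fun herase k
      simpa [Finsupp.erase_ne hk] using this

lemma coeff_T_monomial (i : Fin n) (t : R) (d : Fin n →₀ ℕ) (c : R) (m' : Fin n →₀ ℕ) :
    coeff m' (Tm (fun k => if k = i then t else 0) (monomial d c)) =
      if Finsupp.erase i d = Finsupp.erase i m' ∧ m' i ≤ d i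
      then c * t ^ (d i - m' i) * ((d i).choose (m' i) : R) else 0 := by
  classical
  unfold Tm
  rw [MvPolynomial.aeval_monomial, MvPolynomial.algebraMap_eq]
  have hprod : (d.prod fun k e => (X k + C (if k = i then t else 0)) ^ e) =
      (X i + C t) ^ (d i) * monomial (Finsupp.erase i d) 1 := by
    rw [← Finsupp.mul_prod_erase' d i _ (fun k => pow_zero _)]
    congr 1
    · rw [if_pos rfl]
    · rw [show ((monomial (Finsupp.erase i d)) (1:R)) = C 1 * (Finsupp.erase i d).prod fun k e => X k ^ e from monomial_eq, map_one, one_mul]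
      apply Finsupp.prod_congr
      intro k hk
      have hki : k ≠ i := by
        rw [Finsupp.support_erase, Finset.mem_erase] at hk
        exact hk.1
      rw [if_neg hki, map_zero, add_zero]
  rw [hprod, add_pow, Finset.sum_mul, Finset.mul_sum, coeff_sum]
  have hterm : ∀ e, C c * (X i ^ e * C t ^ (d i - e) * ((d i).choose e : MvPolynomial (Fin n) R) * monomial (Finsupp.erase i d) 1) =
      monomial (Finsupp.single i e + Finsupp.erase i d) (c * (t ^ (d i - e) * ((d i).choose e : R))) := by
    intro e
    rw [← map_pow, ← map_natCast (C : R →+* MvPolynomial (Fin n) R) ((d i).choose e),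
      X_pow_eq_monomial, MvPolynomial.C_apply, MvPolynomial.C_apply, MvPolynomial.C_apply]
    simp only [monomial_mul]
    congr 1
    · ext k; simp
    · ring
  simp only [hterm, coeff_monomial]
  by_cases hE : Finsupp.erase i d = Finsupp.erase i m'
  · have hcond : ∀ e, (Finsupp.single i e + Finsupp.erase i d = m') ↔ e = m' i := by
      intro e
      rw [single_add_erase_eq_iff]
      exact ⟨fun h => h.1, fun h => ⟨h, hE⟩⟩
    have : ∀ e ∈ Finset.range (d i + 1),
        (if Finsupp.single i e + Finsupp.erase i d = m'
          then c * (t ^ (d i - e) * ((d i).choose e : R)) else 0) =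
        (if e = m' i then c * (t ^ (d i - e) * ((d i).choose e : R)) else 0) := by
      intro e _
      rw [if_congr (hcond e) rfl rfl]
    rw [Finset.sum_congr rfl this, Finset.sum_ite_eq']
    simp only [Finset.mem_range]
    by_cases hle : m' i ≤ d i
    · rw [if_pos (by omega), if_pos ⟨hE, hle⟩, mul_assoc]
    · rw [if_neg (by omega), if_neg (fun h => hle h.2)]
  · rw [if_neg (fun h => hE h.1)]
    apply Finset.sum_eq_zero
    intro e _
    rw [if_neg]
    intro h
    exact hE (single_add_erase_eq_iff.1 h).2

lemma coeff_T_sum (i : Fin n) (t : R) (f : MvPolynomial (Fin n) R) (m' : Fin n →₀ ℕ) :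
    coeff m' (Tm (fun k => if k = i then t else 0) f) =
      ∑ d ∈ f.support,
        (if Finsupp.erase i d = Finsupp.erase i m' ∧ m' i ≤ d i
         then coeff d f * t ^ (d i - m' i) * ((d i).choose (m' i) : R) else 0) := by
  conv_lhs => rw [← support_sum_monomial_coeff f]
  rw [map_sum, coeff_sum]
  apply Finset.sum_congr rfl
  intro d _
  rw [coeff_T_monomial]

lemma pWeightDeg_eq_sup (p : ℕ) (f : MvPolynomial (Fin n) R) :
    pWeightDeg p f = f.support.sup (wtv p) := rfl

lemma exists_good_dir (hp : p.Prime) [CharP R p] [IsDomain R] [Infinite R]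
    {f : MvPolynomial (Fin n) R} (hf : f ≠ 0) (hd : 1 ≤ pWeightDeg p f) :
    ∃ a : Fin n → R, Tm a f - f ≠ 0 ∧
      pWeightDeg p (Tm a f - f) = pWeightDeg p f - 1 := by
  classical
  set D := pWeightDeg p f with hD
  obtain ⟨m, hmf, hsup⟩ := Finset.exists_mem_eq_sup f.support
    (MvPolynomial.support_nonempty.2 hf) (wtv p)
  have hwm : wtv p m = D := by rw [hD, pWeightDeg_eq_sup, hsup]
  have hm0 : m ≠ 0 := by
    intro h
    rw [h, wtv_zero] at hwm
    omega
  obtain ⟨i, j, m₂, hdec, hwt, hch⟩ := wtv_decomp hp hm0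
  set q := p ^ j with hq
  have hq1 : 1 ≤ q := Nat.one_le_iff_ne_zero.2 (pow_ne_zero j hp.pos.ne')
  have hmi : m i = m₂ i + q := by
    rw [hdec, Finsupp.add_apply, Finsupp.single_apply, if_pos rfl]
  have heq : Finsupp.erase i m₂ = Finsupp.erase i m := by
    rw [hdec, Finsupp.erase_add, Finsupp.erase_single, add_zero]
  have hoffi : ∀ k, k ≠ i → m₂ k = m k := by
    intro k hk
    rw [hdec, Finsupp.add_apply, Finsupp.single_apply, if_neg (fun h => hk h.symm), add_zero]
  -- the auxiliary one-variable polynomial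
  set φ : Polynomial R :=
    (∑ d ∈ f.support,
      if Finsupp.erase i d = Finsupp.erase i m₂ ∧ m₂ i ≤ d i
      then Polynomial.C (coeff d f * ((d i).choose (m₂ i) : R)) * Polynomial.X ^ (d i - m₂ i)
      else 0) - Polynomial.C (coeff m₂ f) with hφ
  have keyeval : ∀ t : R,
      coeff m₂ (Tm (fun k => if k = i then t else 0) f - f) = Polynomial.eval t φ := by
    intro t
    rw [MvPolynomial.coeff_sub, coeff_T_sum, hφ, Polynomial.eval_sub, Polynomial.eval_C,
      Polynomial.eval_finset_sum]
    congr 1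
    apply Finset.sum_congr rfl
    intro d _
    split_ifs with h
    · rw [Polynomial.eval_mul, Polynomial.eval_C, Polynomial.eval_pow, Polynomial.eval_X]
      ring
    · rw [Polynomial.eval_zero]
  have hφcoeff : Polynomial.coeff φ q = coeff m f * ((m i).choose (m₂ i) : R) := by
    rw [hφ, Polynomial.coeff_sub, Polynomial.coeff_C, if_neg (by omega), sub_zero,
      Polynomial.finset_sum_coeff]
    rw [Finset.sum_eq_single m]
    · rw [if_pos ⟨heq.symm, by omega⟩, Polynomial.coeff_C_mul, Polynomial.coeff_X_pow,
        if_pos (by omega), mul_one]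
    · intro d hdf hdm
      split_ifs with h
      · rw [Polynomial.coeff_C_mul, Polynomial.coeff_X_pow]
        rw [if_neg, mul_zero]
        intro habs
        apply hdm
        ext k
        by_cases hk : k = i
        · subst hk; omega
        · have h1 := DFunLike.congr_fun h.1 k
          rw [Finsupp.erase_ne hk, Finsupp.erase_ne hk] at h1
          rw [h1, hoffi k hk]
      · rfl
    · intro habs
      exact absurd hmf habs
  have hφne : φ ≠ 0 := by
    intro habs
    rw [habs, Polynomial.coeff_zero] at hφcoeff
    have hc1 : coeff m f ≠ 0 := MvPolynomial.mem_support_iff.1 hmf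
    have hc2 : ((m i).choose (m₂ i) : R) ≠ 0 := by
      rw [Ne, CharP.cast_eq_zero_iff R p]
      exact hch
    exact mul_ne_zero hc1 hc2 hφcoeff.symm
  obtain ⟨t, ht⟩ : ∃ t : R, Polynomial.eval t φ ≠ 0 := by
    by_contra h
    push_neg at h
    exact hφne (Polynomial.zero_of_eval_zero φ h)
  refine ⟨fun k => if k = i then t else 0, ?_, ?_⟩
  · intro habs
    have hk := keyeval t
    rw [habs, MvPolynomial.coeff_zero] at hk
    exact ht hk.symm
  · have hmem : m₂ ∈ (Tm (fun k => if k = i then t else 0) f - f).support := by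
      rw [MvPolynomial.mem_support_iff, keyeval t]
      exact ht
    have hwle : ∀ m'' ∈ f.support, wtv p m'' ≤ D := by
      intro m'' h
      rw [hD, pWeightDeg_eq_sup]
      exact Finset.le_sup h
    have hlt := D_wlt hp hwle (fun k => if k = i then t else 0)
    apply le_antisymm
    · rw [pWeightDeg_eq_sup]
      apply Finset.sup_le
      intro m'' h
      have := hlt m'' h
      omega
    · rw [pWeightDeg_eq_sup]
      have h2 := Finset.le_sup (f := wtv p) hmem
      omega

lemma sharp (hp : p.Prime) [CharP R p] [IsDomain R] [Infinite R] :
    ∀ (D : ℕ) (f : MvPolynomial (Fin n) R), f ≠ 0 → pWeightDeg p f = D →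
    ∃ l : List (Fin n → R), l.length = D ∧
      multiDisc l (fun x => eval x f) ≠ 0 := by
  intro D
  induction D with
  | zero =>
    intro f hf _
    refine ⟨[], rfl, ?_⟩
    intro habs
    apply hf
    apply MvPolynomial.funext
    intro x
    have := congrFun habs x
    simpa [multiDisc] using this
  | succ D ih =>
    intro f hf hD
    obtain ⟨a, hg0, hgdeg⟩ := exists_good_dir hp hf (by omega)
    obtain ⟨l, hl, hne⟩ := ih (Tm a f - f) hg0 (by omega)
    refine ⟨l ++ [a], by simp [hl], ?_⟩
    rw [multiDisc_concat, disc_eval]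
    exact hne

end Poly

/-- **Theorem 4.13.** Let `R` be an infinite commutative domain of prime characteristic
`p` and let `f ∈ R[t_1, …, t_n]` be a nonzero polynomial. Then `fdeg(E(f)) = σ_p(f)`:
with `d := σ_p(f)`, every `(d+1)`-fold iterated difference of the evaluation function
`E(f)` vanishes, but if `d ≥ 1` there are `a_1, …, a_d ∈ R^n` with
`Δ_{a_1} ⋯ Δ_{a_d} E(f) ≠ 0`, and if `d = 0` then `E(f) ≠ 0`. -/
theorem fdeg_eval_eq_pWeightDeg_of_infinite_domain
    (p : ℕ) (hp : p.Prime) (R : Type*) [CommRing R] [IsDomain R] [CharP R p] [Infinite R]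
    (n : ℕ) (hn : 1 ≤ n) (f : MvPolynomial (Fin n) R) (hf : f ≠ 0) :
    FdegLE (fun x => MvPolynomial.eval x f) (pWeightDeg p f) ∧
    (1 ≤ pWeightDeg p f → ∃ l : List (Fin n → R), l.length = pWeightDeg p f ∧
      multiDisc l (fun x => MvPolynomial.eval x f) ≠ 0) ∧
    (pWeightDeg p f = 0 → (fun x => MvPolynomial.eval x f) ≠ 0) := by
  refine ⟨?_, ?_, ?_⟩
  · intro l hl
    apply fdegle_of_wle hp (pWeightDeg p f) f _ l hl
    intro m hm
    rw [pWeightDeg_eq_sup] at *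
    exact Finset.le_sup hm
  · intro hd
    exact sharp hp (pWeightDeg p f) f hf rfl
  · intro _ habs
    apply hf
    apply MvPolynomial.funext
    intro x
    have := congrFun habs x
    simpa using this
end
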